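/- arXiv:2106.01506 — 8 statements merged into one kernel-verified Lean document; each statement's English description precedes it below -/
import Mathlib

section
/- Let X ⊆ ℝ^{d_t} and Y ⊆ ℝ^{d_s} be compact sets, let F : X × Y → ℝ be continuous, and let ε > 0. Then there exist positive integers d and m, and for each ℓ = 1, …, d two-layer ReLU networks q_ℓ : ℝ^{d_t} → ℝ and k_ℓ : ℝ^{d_s} → ℝ with m hidden units each, i.e. functions of the form q_ℓ(t) = Σ_{i=1}^{m} a_{ℓ,i} · max(0, ⟨w_{ℓ,i}, t⟩ + b_{ℓ,i}) with a_{ℓ,i}, b_{ℓ,i} ∈ ℝ and w_{ℓ,i} ∈ ℝ^{d_t} (and analogously for k_ℓ with weight vectors in ℝ^{d_s}), such that |F(t, s) − Σ_{ℓ=1}^{d} q_ℓ(t)·k_ℓ(s)| < ε for all t ∈ X and s ∈ Y. -/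
open scoped RealInnerProductSpace

/-- A two-layer ReLU network with `m` hidden units on `ℝ^n`:
`t ↦ ∑ i, a i * max 0 (⟪w i, t⟫ + b i)`. -/
noncomputable def reluNet {n m : ℕ} (a b : Fin m → ℝ)
    (w : Fin m → EuclideanSpace ℝ (Fin n)) (t : EuclideanSpace ℝ (Fin n)) : ℝ :=
  ∑ i, a i * max 0 (⟪w i, t⟫ + b i)

namespace Stmt3Aux

/-- 1-D two-layer ReLU net -/
def OneNet (g : ℝ → ℝ) : Prop :=
  ∃ (m : ℕ) (a c b : Fin m → ℝ), ∀ x, g x = ∑ i, a i * max 0 (c i * x + b i)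

lemma OneNet.zero : OneNet (fun _ => (0:ℝ)) :=
  ⟨0, ![], ![], ![], fun x => by simp⟩

lemma OneNet.unit (a c b : ℝ) : OneNet (fun x => a * max 0 (c * x + b)) :=
  ⟨1, ![a], ![c], ![b], fun x => by simp⟩

lemma OneNet.add {g h : ℝ → ℝ} (hg : OneNet g) (hh : OneNet h) :
    OneNet (fun x => g x + h x) := by
  obtain ⟨m1, a1, c1, b1, H1⟩ := hg
  obtain ⟨m2, a2, c2, b2, H2⟩ := hh
  refine ⟨m1 + m2, Fin.append a1 a2, Fin.append c1 c2, Fin.append b1 b2, fun x => ?_⟩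
  show g x + h x = _
  rw [H1 x, H2 x, Fin.sum_univ_add]
  simp [Fin.append_left, Fin.append_right]

lemma OneNet.finsetSum {ι : Type*} (s : Finset ι) (f : ι → ℝ → ℝ)
    (h : ∀ j ∈ s, OneNet (f j)) : OneNet (fun x => ∑ j ∈ s, f j x) := by
  classical
  induction s using Finset.induction_on with
  | empty => simpa using OneNet.zero
  | insert _ _ hj ih =>
    rename_i j s'
    simp only [Finset.sum_insert hj]
    exact (h j (Finset.mem_insert_self _ _)).add (ih fun i hi => h i (Finset.mem_insert_of_mem hi))

lemma relu_sub (x a : ℝ) : max 0 (x - a) = x - min x a := by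
  rcases le_total x a with h | h
  · simp [min_eq_left h, max_eq_left (sub_nonpos.mpr h)]
  · simp [min_eq_right h, max_eq_right (sub_nonneg.mpr h)]

end Stmt3Aux

namespace Stmt3Aux

lemma min_sub_min_le (x a b : ℝ) (hab : a ≤ b) : min x b - min x a ≤ b - a := by
  rcases le_total x a with h | h
  · rw [min_eq_left h, min_eq_left (h.trans hab)]; linarith
  · rw [min_eq_right h]; have := min_le_right x b; linarith

lemma oneNet_approx (φ : ℝ → ℝ) (hφ : Continuous φ) (R δ : ℝ) (hδ : 0 < δ) :
    ∃ g : ℝ → ℝ, OneNet g ∧ ∀ x ∈ Set.Icc (-R) R, |φ x - g x| ≤ δ := by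
  set R' : ℝ := max R 1 with hR'
  have hR'1 : (1:ℝ) ≤ R' := le_max_right _ _
  have hR'0 : (0:ℝ) < R' := lt_of_lt_of_le one_pos hR'1
  have hsub : Set.Icc (-R) R ⊆ Set.Icc (-R') R' :=
    Set.Icc_subset_Icc (neg_le_neg (le_max_left _ _)) (le_max_left _ _)
  have hK : IsCompact (Set.Icc (-R') R') := isCompact_Icc
  have hUC : UniformContinuousOn φ (Set.Icc (-R') R') :=
    hK.uniformContinuousOn_of_continuous hφ.continuousOn
  rw [Metric.uniformContinuousOn_iff] at hUC
  obtain ⟨η, hη, hUC⟩ := hUC (δ/2) (by positivity)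
  obtain ⟨N, hN⟩ := exists_nat_gt (2 * R' / η)
  have hN0 : 0 < (N:ℝ) := lt_of_le_of_lt (by positivity) hN
  set h : ℝ := 2 * R' / N with hh
  have hh0 : 0 < h := by positivity
  have hhη : h < η := by
    rw [hh, div_lt_iff₀ hN0]
    have := (div_lt_iff₀ hη).mp hN
    linarith
  set pt : ℕ → ℝ := fun j => -R' + j * h with hpt
  have hptmono : ∀ {i j : ℕ}, i ≤ j → pt i ≤ pt j := by
    intro i j hij
    have : (i:ℝ) ≤ (j:ℝ) := Nat.cast_le.mpr hij
    simp only [hpt]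
    nlinarith
  have hpt0 : pt 0 = -R' := by simp [hpt]
  have hptN : pt N = R' := by
    have hN' : (N:ℝ) ≠ 0 := ne_of_gt hN0
    show -R' + (N:ℝ) * (2 * R' / N) = R'
    field_simp
    ring
  have hptstep : ∀ j : ℕ, pt (j+1) - pt j = h := by
    intro j; simp only [hpt]; push_cast; ring
  have hptmem : ∀ j ≤ N, pt j ∈ Set.Icc (-R') R' := by
    intro j hj
    constructor
    · simp only [hpt]
      have : (0:ℝ) ≤ j * h := by positivity
      linarith
    · rw [← hptN]; exact hptmono hj
  set sl : ℕ → ℝ := fun j => (φ (pt (j+1)) - φ (pt j)) / h with hsl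
  have hslb : ∀ j, j + 1 ≤ N → |sl j| ≤ (δ/2)/h := by
    intro j hj
    have hd : dist (pt (j+1)) (pt j) < η := by
      rw [Real.dist_eq, hptstep j, abs_of_pos hh0]; exact hhη
    have hb := hUC _ (hptmem _ hj) _ (hptmem j (by omega)) hd
    rw [Real.dist_eq] at hb
    rw [hsl]
    simp only
    rw [abs_div, abs_of_pos hh0]
    gcongr
  set g : ℝ → ℝ := fun x => φ (-R') + ∑ j ∈ Finset.range N,
      (sl j * max 0 (x - pt j) + (-(sl j)) * max 0 (x - pt (j+1))) with hg
  refine ⟨g, ?_, ?_⟩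
  · rw [hg]
    have h1 : OneNet (fun _ : ℝ => φ (-R')) := by
      have := OneNet.unit (φ (-R')) 0 1
      simpa using this
    refine h1.add (OneNet.finsetSum _ _ fun j _ => ?_)
    have := (OneNet.unit (sl j) 1 (-(pt j))).add (OneNet.unit (-(sl j)) 1 (-(pt (j+1))))
    simpa [one_mul, sub_eq_add_neg] using this
  · intro x hx
    obtain ⟨hx1, hx2⟩ := hsub hx
    set u : ℕ → ℝ := fun j => min x (pt j) with hu
    have humono : ∀ {i j : ℕ}, i ≤ j → u i ≤ u j := fun hij =>
      min_le_min le_rfl (hptmono hij)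
    have huN : u N = x := min_eq_left (by rw [hptN]; exact hx2)
    have hu0 : u 0 = -R' := by
      have h0 : u 0 = pt 0 := min_eq_right (by rw [hpt0]; exact hx1)
      rw [h0, hpt0]
    have humem : ∀ j ≤ N, u j ∈ Set.Icc (-R') R' := fun j hj =>
      ⟨le_min hx1 (hptmem j hj).1, min_le_of_left_le hx2⟩
    have hustep : ∀ j : ℕ, u (j+1) - u j ≤ h := by
      intro j
      have := min_sub_min_le x (pt j) (pt (j+1)) (hptmono (Nat.le_succ j))
      rw [hptstep j] at this
      exact this
    have hrelu : ∀ j : ℕ, max 0 (x - pt j) - max 0 (x - pt (j+1)) = u (j+1) - u j := by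
      intro j
      rw [relu_sub, relu_sub]
      simp only [hu]
      ring
    have htel : φ x - φ (-R') = ∑ j ∈ Finset.range N, (φ (u (j+1)) - φ (u j)) := by
      rw [Finset.sum_range_sub (fun j => φ (u j)), huN, hu0]
    set T : ℕ → ℝ := fun j => (φ (u (j+1)) - φ (u j)) - sl j * (u (j+1) - u j) with hT
    have key : φ x - g x = ∑ j ∈ Finset.range N, T j := by
      have hsplit : ∑ j ∈ Finset.range N, T j
          = (φ x - φ (-R')) - ∑ j ∈ Finset.range N, sl j * (u (j+1) - u j) := by
        simp only [hT]
        rw [Finset.sum_sub_distrib, ← htel]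
      rw [hsplit]
      have hcong : ∀ j ∈ Finset.range N,
          sl j * (u (j+1) - u j)
            = sl j * max 0 (x - pt j) + (-(sl j)) * max 0 (x - pt (j+1)) := by
        intro j _
        rw [← hrelu j]; ring
      rw [Finset.sum_congr rfl hcong]
      simp only [hg]
      ring
    have hTright : ∀ j : ℕ, pt (j+1) ≤ x → T j = 0 := by
      intro j hj
      have h1 : u (j+1) = pt (j+1) := min_eq_right hj
      have h2 : u j = pt j := min_eq_right ((hptmono (Nat.le_succ j)).trans hj)
      have hslh : sl j * h = φ (pt (j+1)) - φ (pt j) := by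
        rw [hsl]; field_simp
      simp only [hT, h1, h2, hptstep j]
      rw [hslh]; ring
    have hTleft : ∀ j : ℕ, x ≤ pt j → T j = 0 := by
      intro j hj
      have h1 : u j = x := min_eq_left hj
      have h2 : u (j+1) = x := min_eq_left (hj.trans (hptmono (Nat.le_succ j)))
      simp only [hT, h1, h2]
      ring
    have hTbound : ∀ j, j + 1 ≤ N → |T j| ≤ δ := by
      intro j hj
      have hb1 : |φ (u (j+1)) - φ (u j)| ≤ δ/2 := by
        have hd : dist (u (j+1)) (u j) < η := by
          rw [Real.dist_eq, abs_of_nonneg (sub_nonneg.mpr (humono (Nat.le_succ j)))]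
          exact lt_of_le_of_lt (hustep j) hhη
        have := hUC _ (humem _ hj) _ (humem j (by omega)) hd
        rw [Real.dist_eq] at this
        linarith
      have hb2 : |sl j * (u (j+1) - u j)| ≤ δ/2 := by
        rw [abs_mul]
        have h3 : |u (j+1) - u j| ≤ h := by
          rw [abs_of_nonneg (sub_nonneg.mpr (humono (Nat.le_succ j)))]
          exact hustep j
        calc |sl j| * |u (j+1) - u j| ≤ ((δ/2)/h) * h :=
              mul_le_mul (hslb j hj) h3 (abs_nonneg _) (by positivity)
          _ = δ/2 := by field_simp
      calc |T j| ≤ |φ (u (j+1)) - φ (u j)| + |sl j * (u (j+1) - u j)| := abs_sub _ _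
        _ ≤ δ := by linarith
    have : |φ x - g x| ≤ δ := by
      rw [key]
      by_cases hex : ∃ j ∈ Finset.range N, pt j < x ∧ x < pt (j+1)
      · obtain ⟨j0, hj0mem, hj0l, hj0r⟩ := hex
        rw [Finset.sum_eq_single_of_mem j0 hj0mem ?_]
        · exact hTbound j0 (Nat.succ_le_of_lt (Finset.mem_range.mp hj0mem))
        · intro b hb hbne
          rcases le_or_gt x (pt b) with hc | hc
          · exact hTleft b hc
          rcases le_or_gt (pt (b+1)) x with hc2 | hc2
          · exact hTright b hc2
          exfalso
          rcases Nat.lt_or_ge b j0 with hlt | hge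
          · have hmb : pt (b+1) ≤ pt j0 := hptmono hlt
            linarith
          · have hgt : j0 + 1 ≤ b := Nat.succ_le_of_lt (lt_of_le_of_ne hge (Ne.symm hbne))
            have hmb : pt (j0+1) ≤ pt b := hptmono hgt
            linarith
      · push_neg at hex
        have hz : ∀ j ∈ Finset.range N, T j = 0 := by
          intro j hj
          rcases le_or_gt x (pt j) with hc | hc
          · exact hTleft j hc
          · exact hTright j (hex j hj hc)
        rw [Finset.sum_eq_zero hz]
        simpa using hδ.le
    exact this

end Stmt3Aux

namespace Stmt3Aux

open scoped RealInnerProductSpace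

/-- multi-D net with exactly `m` units -/
def NetM {n : ℕ} (m : ℕ) (g : EuclideanSpace ℝ (Fin n) → ℝ) : Prop :=
  ∃ (a b : Fin m → ℝ) (w : Fin m → EuclideanSpace ℝ (Fin n)), ∀ t, g t = reluNet a b w t

def Net {n : ℕ} (g : EuclideanSpace ℝ (Fin n) → ℝ) : Prop := ∃ m, NetM m g

lemma Net.ofOne {n : ℕ} {g : ℝ → ℝ} (hg : OneNet g) (w : EuclideanSpace ℝ (Fin n)) :
    Net (fun t => g (⟪w, t⟫)) := by
  obtain ⟨m, a, c, b, H⟩ := hg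
  refine ⟨m, a, b, fun i => c i • w, fun t => ?_⟩
  show g ⟪w, t⟫ = _
  rw [H]
  simp only [reluNet, real_inner_smul_left]

lemma NetM.pad {n : ℕ} {m M : ℕ} (hmM : m ≤ M) {g : EuclideanSpace ℝ (Fin n) → ℝ}
    (hg : NetM m g) : NetM M g := by
  obtain ⟨a, b, w, H⟩ := hg
  refine ⟨fun i => if h : (i:ℕ) < m then a ⟨i, h⟩ else 0,
    fun i => if h : (i:ℕ) < m then b ⟨i, h⟩ else 0,
    fun i => if h : (i:ℕ) < m then w ⟨i, h⟩ else 0, fun t => ?_⟩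
  rw [H]
  simp only [reluNet]
  set F : ℕ → ℝ := fun j =>
    if h : j < m then a ⟨j, h⟩ * max 0 (⟪w ⟨j, h⟩, t⟫ + b ⟨j, h⟩) else 0 with hF
  have h1 : ∀ i : Fin m, a i * max 0 (⟪w i, t⟫ + b i) = F i := by
    intro i
    rw [hF]
    simp only
    rw [dif_pos i.isLt]
  have h2 : ∀ i : Fin M,
      (if h : (i:ℕ) < m then a ⟨i, h⟩ else 0) *
        max 0 (⟪if h : (i:ℕ) < m then w ⟨i, h⟩ else 0, t⟫ +
          if h : (i:ℕ) < m then b ⟨i, h⟩ else 0) = F i := by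
    intro i
    rw [hF]
    simp only
    by_cases h : (i:ℕ) < m
    · rw [dif_pos h, dif_pos h, dif_pos h, dif_pos h]
    · simp only [dif_neg h, zero_mul]
  calc ∑ i : Fin m, a i * max 0 (⟪w i, t⟫ + b i) = ∑ i : Fin m, F i := by
        exact Finset.sum_congr rfl fun i _ => h1 i
    _ = ∑ j ∈ Finset.range m, F j := Fin.sum_univ_eq_sum_range F m
    _ = ∑ j ∈ Finset.range M, F j := by
        refine Finset.sum_subset (Finset.range_subset_range.mpr hmM) ?_
        intro j _ hj
        rw [hF]
        simp only
        rw [dif_neg (by simpa using hj)]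
    _ = ∑ i : Fin M, F i := (Fin.sum_univ_eq_sum_range F M).symm
    _ = _ := (Finset.sum_congr rfl fun i _ => (h2 i).symm)

end Stmt3Aux

namespace Stmt3Aux

lemma cos_mul_cos' (A B : ℝ) : Real.cos A * Real.cos B
    = 1/2 * Real.cos (A + B) + 1/2 * Real.cos (A - B) := by
  rw [Real.cos_add, Real.cos_sub]; ring

lemma cos_span_approx (dt ds : ℕ)
    (X : Set (EuclideanSpace ℝ (Fin dt))) (Y : Set (EuclideanSpace ℝ (Fin ds)))
    (hX : IsCompact X) (hY : IsCompact Y)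
    (F : EuclideanSpace ℝ (Fin dt) × EuclideanSpace ℝ (Fin ds) → ℝ)
    (hF : ContinuousOn F (X ×ˢ Y)) (ε : ℝ) (hε : 0 < ε) :
    ∃ (n : ℕ) (c : Fin n → ℝ) (w : Fin n → EuclideanSpace ℝ (Fin dt))
      (v : Fin n → EuclideanSpace ℝ (Fin ds)) (b : Fin n → ℝ),
      ∀ t ∈ X, ∀ s ∈ Y,
        |F (t, s) - ∑ i, c i * Real.cos (⟪w i, t⟫ + ⟪v i, s⟫ + b i)| < ε := by
  set Z : Set (EuclideanSpace ℝ (Fin dt) × EuclideanSpace ℝ (Fin ds)) := X ×ˢ Y with hZ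
  haveI : CompactSpace ↥Z := isCompact_iff_compactSpace.mp (hX.prod hY)
  set S : Set C(↥Z, ℝ) := {f | ∃ (w : EuclideanSpace ℝ (Fin dt))
      (v : EuclideanSpace ℝ (Fin ds)) (b : ℝ),
      ∀ z : ↥Z, f z = Real.cos (⟪w, z.1.1⟫ + ⟪v, z.1.2⟫ + b)} with hS
  have hgen : ∀ (w : EuclideanSpace ℝ (Fin dt)) (v : EuclideanSpace ℝ (Fin ds)) (b : ℝ),
      ∃ f : C(↥Z, ℝ), ∀ z : ↥Z, f z = Real.cos (⟪w, z.1.1⟫ + ⟪v, z.1.2⟫ + b) := by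
    intro w v b
    refine ⟨⟨fun z => Real.cos (⟪w, z.1.1⟫ + ⟪v, z.1.2⟫ + b), ?_⟩, fun z => rfl⟩
    exact Real.continuous_cos.comp
      (((continuous_const.inner (continuous_fst.comp continuous_subtype_val)).add
        (continuous_const.inner (continuous_snd.comp continuous_subtype_val))).add
        continuous_const)
  have hmulS : ∀ f ∈ S, ∀ g ∈ S, f * g ∈ Submodule.span ℝ S := by
    rintro f ⟨w1, v1, b1, hf⟩ g ⟨w2, v2, b2, hg⟩
    obtain ⟨F1, hF1⟩ := hgen (w1 + w2) (v1 + v2) (b1 + b2)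
    obtain ⟨F2, hF2⟩ := hgen (w1 - w2) (v1 - v2) (b1 - b2)
    have hfg : f * g = (1/2 : ℝ) • F1 + (1/2 : ℝ) • F2 := by
      ext z
      simp only [ContinuousMap.mul_apply, ContinuousMap.add_apply, ContinuousMap.smul_apply,
        smul_eq_mul, hf z, hg z, hF1 z, hF2 z]
      rw [inner_add_left, inner_add_left, inner_sub_left, inner_sub_left]
      rw [show ⟪w1, z.1.1⟫ + ⟪w2, z.1.1⟫ + (⟪v1, z.1.2⟫ + ⟪v2, z.1.2⟫) + (b1 + b2)
            = (⟪w1, z.1.1⟫ + ⟪v1, z.1.2⟫ + b1) + (⟪w2, z.1.1⟫ + ⟪v2, z.1.2⟫ + b2) from by ring,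
          show ⟪w1, z.1.1⟫ - ⟪w2, z.1.1⟫ + (⟪v1, z.1.2⟫ - ⟪v2, z.1.2⟫) + (b1 - b2)
            = (⟪w1, z.1.1⟫ + ⟪v1, z.1.2⟫ + b1) - (⟪w2, z.1.1⟫ + ⟪v2, z.1.2⟫ + b2) from by ring]
      exact cos_mul_cos' _ _
    rw [hfg]
    exact add_mem (Submodule.smul_mem _ _ (Submodule.subset_span ⟨_, _, _, hF1⟩))
      (Submodule.smul_mem _ _ (Submodule.subset_span ⟨_, _, _, hF2⟩))
  have honeS : (1 : C(↥Z, ℝ)) ∈ S := ⟨0, 0, 0, fun z => by simp⟩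
  have hmulV : ∀ x y : C(↥Z, ℝ), x ∈ Submodule.span ℝ S → y ∈ Submodule.span ℝ S →
      x * y ∈ Submodule.span ℝ S := by
    intro x y hx hy
    induction hx using Submodule.span_induction with
    | mem f hf =>
      induction hy using Submodule.span_induction with
      | mem g hg => exact hmulS f hf g hg
      | zero => rw [mul_zero]; exact zero_mem _
      | add g1 g2 _ _ h1 h2 => rw [mul_add]; exact add_mem h1 h2
      | smul r g _ h => rw [mul_smul_comm]; exact Submodule.smul_mem _ _ h
    | zero => rw [zero_mul]; exact zero_mem _
    | add x1 x2 _ _ h1 h2 => rw [add_mul]; exact add_mem h1 h2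
    | smul r x1 _ h => rw [smul_mul_assoc]; exact Submodule.smul_mem _ _ h
  set A : Subalgebra ℝ C(↥Z, ℝ) :=
    (Submodule.span ℝ S).toSubalgebra (Submodule.subset_span honeS) hmulV with hA
  have hsep : A.SeparatesPoints := by
    intro z1 z2 hne
    have hne' : z1.1 ≠ z2.1 := fun h => hne (Subtype.ext h)
    have hcases : z1.1.1 ≠ z2.1.1 ∨ z1.1.2 ≠ z2.1.2 := by
      by_contra hcon
      push_neg at hcon
      exact hne' (Prod.ext hcon.1 hcon.2)
    have hsin : ∀ u1 u2 : ℝ, u1 ≠ u2 →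
        ∃ cc : ℝ, 0 < cc ∧ Real.cos (cc * u1 + Real.pi/2) ≠ Real.cos (cc * u2 + Real.pi/2) := by
      intro u1 u2 hu
      have hpi := Real.pi_pos
      set D : ℝ := |u1| + |u2| + 1 with hD
      have hD0 : 0 < D := by positivity
      set cc : ℝ := (Real.pi/2) / D with hcc
      have hcc0 : 0 < cc := by positivity
      refine ⟨cc, hcc0, ?_⟩
      have hmem : ∀ u : ℝ, |u| ≤ D → cc * u ∈ Set.Icc (-(Real.pi/2)) (Real.pi/2) := by
        intro u hu'
        have h1 : |cc * u| ≤ Real.pi/2 := by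
          rw [abs_mul, abs_of_pos hcc0]
          calc cc * |u| ≤ cc * D := by nlinarith
            _ = Real.pi/2 := by rw [hcc]; field_simp
        exact abs_le.mp h1
      rw [Real.cos_add_pi_div_two, Real.cos_add_pi_div_two]
      intro hcon
      apply hu
      have h1 : |u1| ≤ D := by rw [hD]; have := abs_nonneg u2; linarith
      have h2 : |u2| ≤ D := by rw [hD]; have := abs_nonneg u1; linarith
      have := Real.injOn_sin (hmem u1 h1) (hmem u2 h2) (neg_injective hcon)
      exact mul_left_cancel₀ (ne_of_gt hcc0) this
    rcases hcases with hne1 | hne2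
    · set w0 := z1.1.1 - z2.1.1 with hw0
      have hu : ⟪w0, z1.1.1⟫ ≠ ⟪w0, z2.1.1⟫ := by
        intro hcon
        have h0 : ⟪w0, z1.1.1 - z2.1.1⟫ = 0 := by
          rw [inner_sub_right, hcon]; ring
        rw [← hw0] at h0
        exact hne1 (sub_eq_zero.mp (inner_self_eq_zero.mp h0))
      obtain ⟨cc, hcc0, hcos⟩ := hsin _ _ hu
      obtain ⟨f, hfz⟩ := hgen (cc • w0) 0 (Real.pi/2)
      have hmemA : f ∈ A := Submodule.mem_toSubalgebra.mpr (Submodule.subset_span ⟨_, _, _, hfz⟩)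
      refine ⟨⇑f, ⟨f, hmemA, rfl⟩, ?_⟩
      rw [hfz z1, hfz z2]
      simp only [inner_zero_left, add_zero, real_inner_smul_left]
      exact hcos
    · set v0 := z1.1.2 - z2.1.2 with hv0
      have hu : ⟪v0, z1.1.2⟫ ≠ ⟪v0, z2.1.2⟫ := by
        intro hcon
        have h0 : ⟪v0, z1.1.2 - z2.1.2⟫ = 0 := by
          rw [inner_sub_right, hcon]; ring
        rw [← hv0] at h0
        exact hne2 (sub_eq_zero.mp (inner_self_eq_zero.mp h0))
      obtain ⟨cc, hcc0, hcos⟩ := hsin _ _ hu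
      obtain ⟨f, hfz⟩ := hgen 0 (cc • v0) (Real.pi/2)
      have hmemA : f ∈ A := Submodule.mem_toSubalgebra.mpr (Submodule.subset_span ⟨_, _, _, hfz⟩)
      refine ⟨⇑f, ⟨f, hmemA, rfl⟩, ?_⟩
      rw [hfz z1, hfz z2]
      simp only [inner_zero_left, zero_add, real_inner_smul_left]
      exact hcos
  have hFr : Continuous (Z.restrict F) := ContinuousOn.restrict (by rw [hZ] at *; exact hF)
  obtain ⟨g, hgnear⟩ :=
    ContinuousMap.exists_mem_subalgebra_near_continuous_of_separatesPoints A hsep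
      (Z.restrict F) hFr ε hε
  have hgmem : (g : C(↥Z, ℝ)) ∈ Submodule.span ℝ S := g.2
  rw [Submodule.mem_span_set'] at hgmem
  obtain ⟨n, cf, gf, hsum⟩ := hgmem
  have hprop : ∀ i, ∃ (w : EuclideanSpace ℝ (Fin dt)) (v : EuclideanSpace ℝ (Fin ds)) (b : ℝ),
      ∀ z : ↥Z, (gf i : C(↥Z, ℝ)) z = Real.cos (⟪w, z.1.1⟫ + ⟪v, z.1.2⟫ + b) :=
    fun i => (gf i).2
  choose w v b hwvb using hprop
  refine ⟨n, cf, w, v, b, ?_⟩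
  intro t ht s hs
  have hzmem : (t, s) ∈ Z := by rw [hZ]; exact Set.mem_prod.mpr ⟨ht, hs⟩
  set z : ↥Z := ⟨(t, s), hzmem⟩ with hz
  have h1 : F (t, s) = Z.restrict F z := rfl
  have h2 : ((g : C(↥Z, ℝ)) : ↥Z → ℝ) z = ∑ i, cf i * Real.cos (⟪w i, t⟫ + ⟪v i, s⟫ + b i) := by
    rw [← hsum, ContinuousMap.coe_sum, Finset.sum_apply]
    refine Finset.sum_congr rfl fun i _ => ?_
    rw [ContinuousMap.coe_smul, Pi.smul_apply, smul_eq_mul, hwvb i z]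
  have h3 := hgnear z
  rw [Real.norm_eq_abs, h2] at h3
  rw [h1, abs_sub_comm]
  exact h3

end Stmt3Aux

namespace Stmt3Aux

lemma abs_mul_le' {p q Bp Bq : ℝ} (hp : |p| ≤ Bp) (hq : |q| ≤ Bq) (hBp : 0 ≤ Bp) :
    |p * q| ≤ Bp * Bq := by
  rw [abs_mul]
  exact mul_le_mul hp hq (abs_nonneg _) hBp

lemma final_pack {dt ds : ℕ} (N : ℕ)
    (X : Set (EuclideanSpace ℝ (Fin dt))) (Y : Set (EuclideanSpace ℝ (Fin ds)))
    (F : EuclideanSpace ℝ (Fin dt) × EuclideanSpace ℝ (Fin ds) → ℝ) (ε : ℝ)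
    (Q : Fin N → EuclideanSpace ℝ (Fin dt) → ℝ) (K : Fin N → EuclideanSpace ℝ (Fin ds) → ℝ)
    (hQ : ∀ ℓ, Net (Q ℓ)) (hK : ∀ ℓ, Net (K ℓ))
    (hmain : ∀ t ∈ X, ∀ s ∈ Y, |F (t, s) - ∑ ℓ, Q ℓ t * K ℓ s| < ε) :
    ∃ d m : ℕ, 0 < d ∧ 0 < m ∧
      ∃ (aq bq : Fin d → Fin m → ℝ) (wq : Fin d → Fin m → EuclideanSpace ℝ (Fin dt))
        (ak bk : Fin d → Fin m → ℝ) (wk : Fin d → Fin m → EuclideanSpace ℝ (Fin ds)),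
        ∀ t ∈ X, ∀ s ∈ Y,
          |F (t, s) - ∑ ℓ, reluNet (aq ℓ) (bq ℓ) (wq ℓ) t * reluNet (ak ℓ) (bk ℓ) (wk ℓ) s| < ε := by
  choose mq hmq using hQ
  choose mk hmk using hK
  set M : ℕ := (∑ ℓ, (mq ℓ + mk ℓ)) + 1 with hM
  have hMb : ∀ ℓ, mq ℓ + mk ℓ ≤ M := by
    intro ℓ
    have h1 : mq ℓ + mk ℓ ≤ ∑ ℓ, (mq ℓ + mk ℓ) :=
      Finset.single_le_sum (f := fun ℓ => mq ℓ + mk ℓ)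
        (fun i _ => Nat.zero_le _) (Finset.mem_univ ℓ)
    omega
  have hq' : ∀ ℓ, ∃ (a b : Fin M → ℝ) (w : Fin M → EuclideanSpace ℝ (Fin dt)),
      ∀ t, Q ℓ t = reluNet a b w t :=
    fun ℓ => (hmq ℓ).pad (by have := hMb ℓ; omega)
  have hk' : ∀ ℓ, ∃ (a b : Fin M → ℝ) (w : Fin M → EuclideanSpace ℝ (Fin ds)),
      ∀ s, K ℓ s = reluNet a b w s :=
    fun ℓ => (hmk ℓ).pad (by have := hMb ℓ; omega)
  choose aq bq wq haq using hq'
  choose ak bk wk hak using hk'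
  set aq' : Fin (N+1) → Fin M → ℝ := Fin.snoc aq 0 with haq'
  set bq' : Fin (N+1) → Fin M → ℝ := Fin.snoc bq 0 with hbq'
  set wq' : Fin (N+1) → Fin M → EuclideanSpace ℝ (Fin dt) := Fin.snoc wq 0 with hwq'
  set ak' : Fin (N+1) → Fin M → ℝ := Fin.snoc ak 0 with hak'
  set bk' : Fin (N+1) → Fin M → ℝ := Fin.snoc bk 0 with hbk'
  set wk' : Fin (N+1) → Fin M → EuclideanSpace ℝ (Fin ds) := Fin.snoc wk 0 with hwk'
  refine ⟨N + 1, M, Nat.succ_pos _, Nat.succ_pos _, aq', bq', wq', ak', bk', wk', ?_⟩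
  intro t ht s hs
  have hsum : ∑ ℓ : Fin (N + 1),
      reluNet (aq' ℓ) (bq' ℓ) (wq' ℓ) t * reluNet (ak' ℓ) (bk' ℓ) (wk' ℓ) s
      = ∑ ℓ, Q ℓ t * K ℓ s := by
    rw [Fin.sum_univ_castSucc]
    have hlast : reluNet (aq' (Fin.last N)) (bq' (Fin.last N)) (wq' (Fin.last N)) t = 0 := by
      rw [haq']
      rw [Fin.snoc_last]
      simp [reluNet]
    rw [hlast, zero_mul, add_zero]
    refine Finset.sum_congr rfl fun i _ => ?_
    rw [haq', hbq', hwq', hak', hbk', hwk']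
    rw [Fin.snoc_castSucc, Fin.snoc_castSucc, Fin.snoc_castSucc,
      Fin.snoc_castSucc, Fin.snoc_castSucc, Fin.snoc_castSucc,
      ← haq i t, ← hak i s]
  rw [hsum]
  exact hmain t ht s hs

end Stmt3Aux


theorem stmt_3 (dt ds : ℕ)
    (X : Set (EuclideanSpace ℝ (Fin dt))) (Y : Set (EuclideanSpace ℝ (Fin ds)))
    (hX : IsCompact X) (hY : IsCompact Y)
    (F : EuclideanSpace ℝ (Fin dt) × EuclideanSpace ℝ (Fin ds) → ℝ)
    (hF : ContinuousOn F (X ×ˢ Y)) (ε : ℝ) (hε : 0 < ε) :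
    ∃ d m : ℕ, 0 < d ∧ 0 < m ∧
      ∃ (aq bq : Fin d → Fin m → ℝ) (wq : Fin d → Fin m → EuclideanSpace ℝ (Fin dt))
        (ak bk : Fin d → Fin m → ℝ) (wk : Fin d → Fin m → EuclideanSpace ℝ (Fin ds)),
        ∀ t ∈ X, ∀ s ∈ Y,
          |F (t, s) - ∑ ℓ, reluNet (aq ℓ) (bq ℓ) (wq ℓ) t * reluNet (ak ℓ) (bk ℓ) (wk ℓ) s| < ε := by
  classical
  obtain ⟨n, cf, w, v, b, hcos⟩ :=
    Stmt3Aux.cos_span_approx dt ds X Y hX hY F hF (ε/2) (by positivity)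
  obtain ⟨Ct, hCt⟩ := isBounded_iff_forall_norm_le.mp hX.isBounded
  obtain ⟨Cs, hCs⟩ := isBounded_iff_forall_norm_le.mp hY.isBounded
  set δ' : Fin n → ℝ := fun i => min 1 (ε / (4 * ((n:ℝ)+1) * (|cf i| + 2))) with hδ'
  have hδ'0 : ∀ i, 0 < δ' i := fun i => lt_min one_pos (by positivity)
  have hδ'1 : ∀ i, δ' i ≤ 1 := fun i => min_le_left _ _
  have hδ'2 : ∀ i, δ' i ≤ ε / (4 * ((n:ℝ)+1) * (|cf i| + 2)) := fun i => min_le_right _ _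
  have hmemt : ∀ (i : Fin n), ∀ t ∈ X, ⟪w i, t⟫ ∈ Set.Icc (-(‖w i‖ * Ct)) (‖w i‖ * Ct) := by
    intro i t ht
    refine abs_le.mp ?_
    calc |⟪w i, t⟫| ≤ ‖w i‖ * ‖t‖ := abs_real_inner_le_norm _ _
      _ ≤ ‖w i‖ * Ct := mul_le_mul_of_nonneg_left (hCt t ht) (norm_nonneg _)
  have hmems : ∀ (i : Fin n), ∀ s ∈ Y, ⟪v i, s⟫ ∈ Set.Icc (-(‖v i‖ * Cs)) (‖v i‖ * Cs) := by
    intro i s hs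
    refine abs_le.mp ?_
    calc |⟪v i, s⟫| ≤ ‖v i‖ * ‖s‖ := abs_real_inner_le_norm _ _
      _ ≤ ‖v i‖ * Cs := mul_le_mul_of_nonneg_left (hCs s hs) (norm_nonneg _)
  have hq1ex : ∀ i : Fin n, ∃ q, Stmt3Aux.Net q ∧
      ∀ t ∈ X, |cf i * Real.cos ⟪w i, t⟫ - q t| ≤ δ' i := by
    intro i
    obtain ⟨g, hg, hga⟩ := Stmt3Aux.oneNet_approx (fun y => cf i * Real.cos y)
      (continuous_const.mul Real.continuous_cos) (‖w i‖ * Ct) (δ' i) (hδ'0 i)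
    exact ⟨fun t => g ⟪w i, t⟫, Stmt3Aux.Net.ofOne hg (w i),
      fun t ht => hga _ (hmemt i t ht)⟩
  have hq2ex : ∀ i : Fin n, ∃ q, Stmt3Aux.Net q ∧
      ∀ t ∈ X, |(-(cf i)) * Real.sin ⟪w i, t⟫ - q t| ≤ δ' i := by
    intro i
    obtain ⟨g, hg, hga⟩ := Stmt3Aux.oneNet_approx (fun y => (-(cf i)) * Real.sin y)
      (continuous_const.mul Real.continuous_sin) (‖w i‖ * Ct) (δ' i) (hδ'0 i)
    exact ⟨fun t => g ⟪w i, t⟫, Stmt3Aux.Net.ofOne hg (w i),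
      fun t ht => hga _ (hmemt i t ht)⟩
  have hk1ex : ∀ i : Fin n, ∃ k, Stmt3Aux.Net k ∧
      ∀ s ∈ Y, |Real.cos (⟪v i, s⟫ + b i) - k s| ≤ δ' i := by
    intro i
    obtain ⟨g, hg, hga⟩ := Stmt3Aux.oneNet_approx (fun y => Real.cos (y + b i))
      (Real.continuous_cos.comp (continuous_id.add continuous_const))
      (‖v i‖ * Cs) (δ' i) (hδ'0 i)
    exact ⟨fun s => g ⟪v i, s⟫, Stmt3Aux.Net.ofOne hg (v i),
      fun s hs => hga _ (hmems i s hs)⟩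
  have hk2ex : ∀ i : Fin n, ∃ k, Stmt3Aux.Net k ∧
      ∀ s ∈ Y, |Real.sin (⟪v i, s⟫ + b i) - k s| ≤ δ' i := by
    intro i
    obtain ⟨g, hg, hga⟩ := Stmt3Aux.oneNet_approx (fun y => Real.sin (y + b i))
      (Real.continuous_sin.comp (continuous_id.add continuous_const))
      (‖v i‖ * Cs) (δ' i) (hδ'0 i)
    exact ⟨fun s => g ⟪v i, s⟫, Stmt3Aux.Net.ofOne hg (v i),
      fun s hs => hga _ (hmems i s hs)⟩
  choose q1 hq1net hq1 using hq1ex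
  choose q2 hq2net hq2 using hq2ex
  choose k1 hk1net hk1 using hk1ex
  choose k2 hk2net hk2 using hk2ex
  have hn0 : (0:ℝ) < (n:ℝ) + 1 := by positivity
  -- per-index estimate
  have hper : ∀ t ∈ X, ∀ s ∈ Y, ∀ i : Fin n,
      |cf i * Real.cos (⟪w i, t⟫ + ⟪v i, s⟫ + b i)
        - (q1 i t * k1 i s + q2 i t * k2 i s)| ≤ ε / (2 * ((n:ℝ)+1)) := by
    intro t ht s hs i
    set A : ℝ := ⟪w i, t⟫ with hA
    set B : ℝ := ⟪v i, s⟫ + b i with hB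
    have hq1i : |cf i * Real.cos A - q1 i t| ≤ δ' i := hq1 i t ht
    have hq2i : |(-(cf i)) * Real.sin A - q2 i t| ≤ δ' i := hq2 i t ht
    have hk1i : |Real.cos B - k1 i s| ≤ δ' i := hk1 i s hs
    have hk2i : |Real.sin B - k2 i s| ≤ δ' i := hk2 i s hs
    have hq1b : |q1 i t| ≤ |cf i| + 1 := by
      have e : q1 i t = cf i * Real.cos A - (cf i * Real.cos A - q1 i t) := by ring
      rw [e]
      calc |cf i * Real.cos A - (cf i * Real.cos A - q1 i t)|
          ≤ |cf i * Real.cos A| + |cf i * Real.cos A - q1 i t| := abs_sub _ _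
        _ ≤ |cf i| * 1 + δ' i := by
            refine add_le_add ?_ hq1i
            rw [abs_mul]
            exact mul_le_mul_of_nonneg_left (Real.abs_cos_le_one A) (abs_nonneg _)
        _ ≤ |cf i| + 1 := by linarith [hδ'1 i]
    have hq2b : |q2 i t| ≤ |cf i| + 1 := by
      have e : q2 i t = (-(cf i)) * Real.sin A - ((-(cf i)) * Real.sin A - q2 i t) := by ring
      rw [e]
      calc |(-(cf i)) * Real.sin A - ((-(cf i)) * Real.sin A - q2 i t)|
          ≤ |(-(cf i)) * Real.sin A| + |(-(cf i)) * Real.sin A - q2 i t| := abs_sub _ _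
        _ ≤ |cf i| * 1 + δ' i := by
            refine add_le_add ?_ hq2i
            rw [abs_mul, abs_neg]
            exact mul_le_mul_of_nonneg_left (Real.abs_sin_le_one A) (abs_nonneg _)
        _ ≤ |cf i| + 1 := by linarith [hδ'1 i]
    have hAB : ⟪w i, t⟫ + ⟪v i, s⟫ + b i = A + B := by rw [hA, hB]; ring
    have e1 : cf i * Real.cos (⟪w i, t⟫ + ⟪v i, s⟫ + b i)
        - (q1 i t * k1 i s + q2 i t * k2 i s)
        = (cf i * Real.cos A - q1 i t) * Real.cos B + q1 i t * (Real.cos B - k1 i s)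
          + (((-(cf i)) * Real.sin A - q2 i t) * Real.sin B
            + q2 i t * (Real.sin B - k2 i s)) := by
      rw [hAB, Real.cos_add]
      ring
    have hK0 : (0:ℝ) < |cf i| + 2 := by positivity
    calc |cf i * Real.cos (⟪w i, t⟫ + ⟪v i, s⟫ + b i)
          - (q1 i t * k1 i s + q2 i t * k2 i s)|
        = |(cf i * Real.cos A - q1 i t) * Real.cos B + q1 i t * (Real.cos B - k1 i s)
          + (((-(cf i)) * Real.sin A - q2 i t) * Real.sin B
            + q2 i t * (Real.sin B - k2 i s))| := by rw [e1]
      _ ≤ |(cf i * Real.cos A - q1 i t) * Real.cos B + q1 i t * (Real.cos B - k1 i s)|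
          + |((-(cf i)) * Real.sin A - q2 i t) * Real.sin B
            + q2 i t * (Real.sin B - k2 i s)| := abs_add_le _ _
      _ ≤ (|(cf i * Real.cos A - q1 i t) * Real.cos B| + |q1 i t * (Real.cos B - k1 i s)|)
          + (|((-(cf i)) * Real.sin A - q2 i t) * Real.sin B|
            + |q2 i t * (Real.sin B - k2 i s)|) := add_le_add (abs_add_le _ _) (abs_add_le _ _)
      _ ≤ (δ' i * 1 + (|cf i| + 1) * δ' i) + (δ' i * 1 + (|cf i| + 1) * δ' i) := by
          refine add_le_add (add_le_add ?_ ?_) (add_le_add ?_ ?_)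
          · exact Stmt3Aux.abs_mul_le' hq1i (Real.abs_cos_le_one B) (hδ'0 i).le
          · exact Stmt3Aux.abs_mul_le' hq1b hk1i (by positivity)
          · exact Stmt3Aux.abs_mul_le' hq2i (Real.abs_sin_le_one B) (hδ'0 i).le
          · exact Stmt3Aux.abs_mul_le' hq2b hk2i (by positivity)
      _ = 2 * (δ' i * (|cf i| + 2)) := by ring
      _ ≤ ε / (2 * ((n:ℝ)+1)) := by
          have h1 : δ' i * (|cf i| + 2) ≤ (ε / (4 * ((n:ℝ)+1) * (|cf i| + 2))) * (|cf i| + 2) :=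
            mul_le_mul_of_nonneg_right (hδ'2 i) hK0.le
          have h2 : 2 * ((ε / (4 * ((n:ℝ)+1) * (|cf i| + 2))) * (|cf i| + 2))
              = ε / (2 * ((n:ℝ)+1)) := by
            field_simp
            ring
          linarith
  -- assemble Q, K
  set Q : Fin (n + n) → EuclideanSpace ℝ (Fin dt) → ℝ := Fin.append q1 q2 with hQdef
  set K : Fin (n + n) → EuclideanSpace ℝ (Fin ds) → ℝ := Fin.append k1 k2 with hKdef
  have hQnet : ∀ ℓ, Stmt3Aux.Net (Q ℓ) := by
    intro ℓ
    refine Fin.addCases (fun i => ?_) (fun i => ?_) ℓ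
    · rw [hQdef, Fin.append_left]; exact hq1net i
    · rw [hQdef, Fin.append_right]; exact hq2net i
  have hKnet : ∀ ℓ, Stmt3Aux.Net (K ℓ) := by
    intro ℓ
    refine Fin.addCases (fun i => ?_) (fun i => ?_) ℓ
    · rw [hKdef, Fin.append_left]; exact hk1net i
    · rw [hKdef, Fin.append_right]; exact hk2net i
  refine Stmt3Aux.final_pack (n + n) X Y F ε Q K hQnet hKnet ?_
  intro t ht s hs
  have hsplit : ∑ ℓ, Q ℓ t * K ℓ s
      = ∑ i, (q1 i t * k1 i s + q2 i t * k2 i s) := by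
    rw [Finset.sum_add_distrib, Fin.sum_univ_add]
    congr 1
    · exact Finset.sum_congr rfl fun i _ => by
        rw [hQdef, hKdef, Fin.append_left, Fin.append_left]
    · exact Finset.sum_congr rfl fun i _ => by
        rw [hQdef, hKdef, Fin.append_right, Fin.append_right]
  have hsum2 : |∑ i, cf i * Real.cos (⟪w i, t⟫ + ⟪v i, s⟫ + b i)
      - ∑ i, (q1 i t * k1 i s + q2 i t * k2 i s)| ≤ ε/2 := by
    rw [← Finset.sum_sub_distrib]
    calc |∑ i : Fin n, (cf i * Real.cos (⟪w i, t⟫ + ⟪v i, s⟫ + b i)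
          - (q1 i t * k1 i s + q2 i t * k2 i s))|
        ≤ ∑ i : Fin n, |cf i * Real.cos (⟪w i, t⟫ + ⟪v i, s⟫ + b i)
          - (q1 i t * k1 i s + q2 i t * k2 i s)| := Finset.abs_sum_le_sum_abs _ _
      _ ≤ ∑ _i : Fin n, ε / (2 * ((n:ℝ)+1)) :=
          Finset.sum_le_sum fun i _ => hper t ht s hs i
      _ = (n:ℝ) * (ε / (2 * ((n:ℝ)+1))) := by
          rw [Finset.sum_const, Finset.card_univ, Fintype.card_fin, nsmul_eq_mul]
      _ ≤ ε/2 := by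
          have hu0 : 0 ≤ ε / (2 * ((n:ℝ)+1)) := by positivity
          have hu : (ε / (2 * ((n:ℝ)+1))) * (2 * ((n:ℝ)+1)) = ε :=
            div_mul_cancel₀ _ (by positivity)
          nlinarith [hu0, hu]
  calc |F (t, s) - ∑ ℓ, Q ℓ t * K ℓ s|
      = |(F (t, s) - ∑ i, cf i * Real.cos (⟪w i, t⟫ + ⟪v i, s⟫ + b i))
        + (∑ i, cf i * Real.cos (⟪w i, t⟫ + ⟪v i, s⟫ + b i) - ∑ ℓ, Q ℓ t * K ℓ s)| := by
        congr 1; ring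
    _ ≤ |F (t, s) - ∑ i, cf i * Real.cos (⟪w i, t⟫ + ⟪v i, s⟫ + b i)|
        + |∑ i, cf i * Real.cos (⟪w i, t⟫ + ⟪v i, s⟫ + b i) - ∑ ℓ, Q ℓ t * K ℓ s| := abs_add_le _ _
    _ < ε/2 + ε/2 := by
        refine add_lt_add_of_lt_of_le (hcos t ht s hs) ?_
        rw [hsplit]
        exact hsum2
    _ = ε := by ring
end

section
/- Let X ⊆ ℝ^{d_t} and Y ⊆ ℝ^{d_s} be compact sets, let F : X × Y → ℝ be a continuous function with F(t, s) > 0 for all t ∈ X, s ∈ Y, and let ε > 0. Then there exist positive integers d and m and two-layer ReLU networks q_ℓ : ℝ^{d_t} → ℝ and k_ℓ : ℝ^{d_s} → ℝ (ℓ = 1, …, d) with m hidden units each, such that |F(t, s) − exp((Σ_{ℓ=1}^{d} q_ℓ(t)·k_ℓ(s))/√d)| < ε for all t ∈ X and s ∈ Y. -/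
open scoped RealInnerProductSpace

private lemma sum_pair (N : ℕ) (g : ℕ → ℝ) :
    ∑ i ∈ Finset.range (2 * N), g i = ∑ j ∈ Finset.range N, (g (2 * j) + g (2 * j + 1)) := by
  induction N with
  | zero => simp
  | succ n ih =>
      have h2 : 2 * (n + 1) = (2 * n + 1) + 1 := by ring
      rw [Finset.sum_range_succ, ← ih, h2, Finset.sum_range_succ, Finset.sum_range_succ]
      ring

/-- piecewise-linear interpolant written as a combination of ReLUs -/
noncomputable def pl (φ : ℝ → ℝ) (A h : ℝ) (N : ℕ) (x : ℝ) : ℝ :=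
  φ A + ∑ j ∈ Finset.range N,
    ((φ (A + ((j : ℝ) + 1) * h) - φ (A + (j : ℝ) * h)) / h) *
      (max 0 (x - (A + (j : ℝ) * h)) - max 0 (x - (A + ((j : ℝ) + 1) * h)))

private lemma plApprox (φ : ℝ → ℝ) (hφ : Continuous φ) (A B δ : ℝ) (hAB : A < B) (hδ : 0 < δ) :
    ∃ N : ℕ, 0 < N ∧ ∀ x ∈ Set.Icc A B,
      |φ x - pl φ A ((B - A) / N) N x| ≤ δ := by
  have hc : UniformContinuousOn φ (Set.Icc A B) :=
    isCompact_Icc.uniformContinuousOn_of_continuous hφ.continuousOn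
  rw [Metric.uniformContinuousOn_iff_le] at hc
  obtain ⟨δ₀, hδ₀, hmod⟩ := hc (δ / 2) (by positivity)
  obtain ⟨N, hN⟩ := exists_nat_gt (max 1 ((B - A) / δ₀))
  have hN1 : (1 : ℝ) < N := lt_of_le_of_lt (le_max_left _ _) hN
  have hN0 : 0 < N := by exact_mod_cast lt_trans zero_lt_one hN1
  have hNR : (0 : ℝ) < N := by positivity
  refine ⟨N, hN0, ?_⟩
  set h : ℝ := (B - A) / N with hh_def
  simp only [pl]
  have hh : 0 < h := div_pos (by linarith) hNR
  have hhδ₀ : h ≤ δ₀ := by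
    have h1 : (B - A) / δ₀ < N := lt_of_le_of_lt (le_max_right _ _) hN
    have h2 := (div_lt_iff₀ hδ₀).mp h1
    rw [hh_def, div_le_iff₀ hNR]
    nlinarith
  have hNh : (N : ℝ) * h = B - A := by
    rw [hh_def]; field_simp
  clear_value h
  clear hh_def hN hN1
  intro x hx
  set y : ℝ := (x - A) / h with hy_def
  have hy0 : 0 ≤ y := div_nonneg (by linarith [hx.1]) hh.le
  have hyh : y * h = x - A := div_mul_cancel₀ _ hh.ne'
  set k : ℕ := min (N - 1) ⌊y⌋₊ with hk_def
  have hkN : k + 1 ≤ N := by omega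
  have hky : (k : ℝ) ≤ y := le_trans (by exact_mod_cast Nat.cast_le.mpr (min_le_right _ _))
    (Nat.floor_le hy0)
  have hxk : A + k * h ≤ x := by
    have h1 : (k : ℝ) * h ≤ y * h := mul_le_mul_of_nonneg_right hky hh.le
    rw [hyh] at h1
    linarith
  have hxk1 : x ≤ A + ((k : ℝ) + 1) * h := by
    rcases le_or_gt ⌊y⌋₊ (N - 1) with hc1 | hc1
    · have hk : k = ⌊y⌋₊ := min_eq_right hc1
      have h1 : y < ⌊y⌋₊ + 1 := Nat.lt_floor_add_one y
      have h2 : y * h < ((⌊y⌋₊ : ℝ) + 1) * h := mul_lt_mul_of_pos_right h1 hh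
      rw [hyh] at h2
      rw [hk]
      linarith
    · have hk : (k : ℝ) + 1 = N := by
        have : k = N - 1 := min_eq_left hc1.le
        have : k + 1 = N := by omega
        exact_mod_cast congrArg (Nat.cast : ℕ → ℝ) this
      rw [hk, hNh]
      linarith [hx.2]
  clear_value y k
  -- evaluate the sum
  set s : ℝ := (φ (A + ((k : ℝ) + 1) * h) - φ (A + (k : ℝ) * h)) / h with hs_def
  have hsum : ∑ j ∈ Finset.range N,
        ((φ (A + ((j : ℝ) + 1) * h) - φ (A + (j : ℝ) * h)) / h) *
          (max 0 (x - (A + (j : ℝ) * h)) - max 0 (x - (A + ((j : ℝ) + 1) * h)))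
      = (φ (A + (k : ℝ) * h) - φ A) + s * (x - (A + (k : ℝ) * h)) := by
    set term : ℕ → ℝ := fun j =>
      ((φ (A + ((j : ℝ) + 1) * h) - φ (A + (j : ℝ) * h)) / h) *
        (max 0 (x - (A + (j : ℝ) * h)) - max 0 (x - (A + ((j : ℝ) + 1) * h))) with hterm_def
    have h1 : ∑ j ∈ Finset.range N, term j = ∑ j ∈ Finset.range (k + 1), term j := by
      refine (Finset.sum_subset (Finset.range_subset_range.2 hkN) ?_).symm
      intro j _ hj
      rw [Finset.mem_range, not_lt] at hj
      have hj' : ((k : ℝ) + 1) ≤ j := by exact_mod_cast hj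
      have hxle : x ≤ A + (j : ℝ) * h := by
        have : ((k : ℝ) + 1) * h ≤ (j : ℝ) * h := mul_le_mul_of_nonneg_right hj' hh.le
        linarith
      have e1 : max 0 (x - (A + (j : ℝ) * h)) = 0 := max_eq_left (by linarith)
      have e2 : max 0 (x - (A + ((j : ℝ) + 1) * h)) = 0 := max_eq_left (by nlinarith)
      simp [hterm_def, e1, e2]
    rw [h1, Finset.sum_range_succ]
    have h2 : ∀ j ∈ Finset.range k, term j = φ (A + ((j : ℕ) + 1 : ℕ) * h) - φ (A + (j : ℕ) * h) := by
      intro j hj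
      rw [Finset.mem_range] at hj
      have hj1 : ((j : ℝ) + 1) ≤ k := by exact_mod_cast hj
      have hxj1 : A + ((j : ℝ) + 1) * h ≤ x := by
        have : ((j : ℝ) + 1) * h ≤ (k : ℝ) * h := mul_le_mul_of_nonneg_right hj1 hh.le
        linarith
      have hxj : A + (j : ℝ) * h ≤ x := by nlinarith
      have e1 : max 0 (x - (A + (j : ℝ) * h)) = x - (A + (j : ℝ) * h) :=
        max_eq_right (by linarith)
      have e2 : max 0 (x - (A + ((j : ℝ) + 1) * h)) = x - (A + ((j : ℝ) + 1) * h) :=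
        max_eq_right (by linarith)
      rw [hterm_def]
      simp only [e1, e2]
      have hcl : x - (A + (j : ℝ) * h) - (x - (A + ((j : ℝ) + 1) * h)) = h := by ring
      rw [hcl, div_mul_cancel₀ _ hh.ne']
      push_cast
      ring
    rw [Finset.sum_congr rfl h2, Finset.sum_range_sub (fun j => φ (A + (j : ℝ) * h))]
    have e1 : max 0 (x - (A + (k : ℝ) * h)) = x - (A + (k : ℝ) * h) := max_eq_right (by linarith)
    have e2 : max 0 (x - (A + ((k : ℝ) + 1) * h)) = 0 := max_eq_left (by linarith)
    rw [hterm_def]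
    simp only [e1, e2, Nat.cast_zero, zero_mul, add_zero]
    rw [hs_def]
    ring
  clear_value s
  -- error bound
  have hxkI : A + (k : ℝ) * h ∈ Set.Icc A B := by
    constructor
    · nlinarith [hh.le, (Nat.cast_nonneg k : (0:ℝ) ≤ k)]
    · linarith [hx.2]
  have hxk1I : A + ((k : ℝ) + 1) * h ∈ Set.Icc A B := by
    have hkN' : ((k : ℝ) + 1) ≤ N := by exact_mod_cast hkN
    constructor
    · nlinarith [hh.le, (Nat.cast_nonneg k : (0:ℝ) ≤ k)]
    · nlinarith [hh.le]
  have hb1 : |φ x - φ (A + (k : ℝ) * h)| ≤ δ / 2 := by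
    have := hmod x hx (A + (k : ℝ) * h) hxkI ?_
    · rwa [Real.dist_eq] at this
    · rw [Real.dist_eq, abs_of_nonneg (by linarith)]
      linarith
  have hb2 : |s * (x - (A + (k : ℝ) * h))| ≤ δ / 2 := by
    have hd : |φ (A + ((k : ℝ) + 1) * h) - φ (A + (k : ℝ) * h)| ≤ δ / 2 := by
      have := hmod (A + ((k : ℝ) + 1) * h) hxk1I (A + (k : ℝ) * h) hxkI ?_
      · rwa [Real.dist_eq] at this
      · rw [Real.dist_eq, abs_of_nonneg (by nlinarith [hh.le])]
        linarith
    have h1 : |s * (x - (A + (k : ℝ) * h))| ≤ |s| * h := by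
      rw [abs_mul]
      refine mul_le_mul_of_nonneg_left ?_ (abs_nonneg _)
      rw [abs_of_nonneg (by linarith)]
      linarith
    have h2 : |s| * h = |φ (A + ((k : ℝ) + 1) * h) - φ (A + (k : ℝ) * h)| := by
      rw [hs_def, abs_div, abs_of_pos hh, div_mul_cancel₀ _ hh.ne']
    rw [h2] at h1
    exact h1.trans hd
  rw [hsum]
  have hre : φ x - (φ A + ((φ (A + (k : ℝ) * h) - φ A) + s * (x - (A + (k : ℝ) * h))))
      = (φ x - φ (A + (k : ℝ) * h)) - s * (x - (A + (k : ℝ) * h)) := by ring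
  rw [hre]
  calc |(φ x - φ (A + (k : ℝ) * h)) - s * (x - (A + (k : ℝ) * h))|
      ≤ |φ x - φ (A + (k : ℝ) * h)| + |s * (x - (A + (k : ℝ) * h))| := abs_sub _ _
    _ ≤ δ / 2 + δ / 2 := add_le_add hb1 hb2
    _ = δ := by ring



private lemma sum_pair' (N : ℕ) (g : ℕ → ℝ) :
    ∑ i ∈ Finset.range (2 * N), g i = ∑ j ∈ Finset.range N, (g (2 * j) + g (2 * j + 1)) := by
  induction N with
  | zero => simp
  | succ n ih =>
      have h2 : 2 * (n + 1) = (2 * n + 1) + 1 := by ring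
      rw [Finset.sum_range_succ, ← ih, h2, Finset.sum_range_succ, Finset.sum_range_succ]
      ring

private lemma pl_repr (φ : ℝ → ℝ) (A h : ℝ) (N : ℕ) :
    ∃ (a c b : Fin (2 * N + 1) → ℝ),
      ∀ x : ℝ, (∑ i, a i * max 0 (c i * x + b i)) = pl φ A h N x := by
  classical
  set sl : ℕ → ℝ := fun j => (φ (A + ((j : ℝ) + 1) * h) - φ (A + (j : ℝ) * h)) / h with hsl
  set pa : ℕ → ℝ := fun i =>
    if i = 0 then φ A else if i % 2 = 1 then sl ((i - 1) / 2) else -sl ((i - 1) / 2) with hpa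
  set pc : ℕ → ℝ := fun i => if i = 0 then 0 else 1 with hpc
  set pb : ℕ → ℝ := fun i =>
    if i = 0 then 1 else
      if i % 2 = 1 then -(A + (((i - 1) / 2 : ℕ) : ℝ) * h)
      else -(A + ((((i - 1) / 2 : ℕ) : ℝ) + 1) * h) with hpb
  refine ⟨fun i => pa i.val, fun i => pc i.val, fun i => pb i.val, ?_⟩
  intro x
  set f : ℕ → ℝ := fun i => pa i * max 0 (pc i * x + pb i) with hf
  have h0 : (∑ i : Fin (2 * N + 1), pa i.val * max 0 (pc i.val * x + pb i.val))
      = ∑ i ∈ Finset.range (2 * N + 1), f i := by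
    exact Fin.sum_univ_eq_sum_range f (2 * N + 1)
  rw [h0, Finset.sum_range_succ', sum_pair']
  have hf0 : f 0 = φ A := by
    simp [hf, hpa, hpc, hpb]
  have hpair : ∀ j, f (2 * j + 1) + f (2 * j + 1 + 1)
      = sl j * (max 0 (x - (A + (j : ℝ) * h)) - max 0 (x - (A + ((j : ℝ) + 1) * h))) := by
    intro j
    have e1 : (2 * j + 1) % 2 = 1 := by omega
    have e2 : (2 * j + 1 - 1) / 2 = j := by omega
    have e3 : (2 * j + 1 + 1) % 2 = 0 := by omega
    have e4 : (2 * j + 1 + 1 - 1) / 2 = j := by omega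
    have ne1 : 2 * j + 1 ≠ 0 := by omega
    have ne2 : 2 * j + 1 + 1 ≠ 0 := by omega
    have m1 : (1 : ℝ) * x + -(A + (j : ℝ) * h) = x - (A + (j : ℝ) * h) := by ring
    have m2 : (1 : ℝ) * x + -(A + ((j : ℝ) + 1) * h) = x - (A + ((j : ℝ) + 1) * h) := by ring
    simp only [hf, hpa, hpc, hpb, if_neg ne1, if_neg ne2, e1, e2, e3, e4, if_pos rfl]
    norm_num [m1, m2]
    ring
  have hsum2 : ∑ j ∈ Finset.range N, (f (2 * j + 1) + f (2 * j + 1 + 1))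
      = ∑ j ∈ Finset.range N,
          sl j * (max 0 (x - (A + (j : ℝ) * h)) - max 0 (x - (A + ((j : ℝ) + 1) * h))) :=
    Finset.sum_congr rfl fun j _ => hpair j
  rw [hf0, hsum2]
  simp only [hsl, pl]
  ring




private lemma oneD (φ : ℝ → ℝ) (hφ : Continuous φ) (R δ : ℝ) (hδ : 0 < δ) :
    ∃ m : ℕ, 0 < m ∧ ∃ a c b : Fin m → ℝ,
      ∀ x ∈ Set.Icc (-R) R, |φ x - ∑ i, a i * max 0 (c i * x + b i)| ≤ δ := by
  rcases lt_trichotomy R 0 with hR | hR | hR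
  · refine ⟨1, one_pos, 0, 0, 0, ?_⟩
    intro x hx
    exfalso
    have := hx.1; have := hx.2
    linarith
  · subst hR
    refine ⟨1, one_pos, fun _ => φ 0, 0, fun _ => 1, ?_⟩
    intro x hx
    have hx0 : x = 0 := le_antisymm (by simpa using hx.2) (by simpa using hx.1)
    subst hx0
    norm_num
    linarith
  · obtain ⟨N, hN0, hap⟩ := plApprox φ hφ (-R) R δ (by linarith) hδ
    obtain ⟨a, c, b, hrep⟩ := pl_repr φ (-R) ((R - -R) / N) N
    refine ⟨2 * N + 1, by omega, a, c, b, ?_⟩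
    intro x hx
    rw [hrep]
    exact hap x hx

private lemma netApproxComp {n : ℕ} {X : Set (EuclideanSpace ℝ (Fin n))} (hX : IsCompact X)
    (w : EuclideanSpace ℝ (Fin n)) (φ : ℝ → ℝ) (hφ : Continuous φ) (δ : ℝ) (hδ : 0 < δ) :
    ∃ m : ℕ, 0 < m ∧ ∃ (a b : Fin m → ℝ) (W : Fin m → EuclideanSpace ℝ (Fin n)),
      ∀ t ∈ X, |φ ⟪w, t⟫ - reluNet a b W t| ≤ δ := by
  obtain ⟨R0, hR0⟩ := hX.isBounded.exists_norm_le
  have hR0' : 0 ≤ ‖w‖ * R0 + 1 ∨ True := Or.inr trivial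
  obtain ⟨m, hm, a, c, b, hab⟩ := oneD φ hφ (‖w‖ * R0 + 1) δ hδ
  refine ⟨m, hm, a, b, fun i => c i • w, ?_⟩
  intro t ht
  have hin : ⟪w, t⟫ ∈ Set.Icc (-(‖w‖ * R0 + 1)) (‖w‖ * R0 + 1) := by
    have h1 : |⟪w, t⟫| ≤ ‖w‖ * ‖t‖ := abs_real_inner_le_norm w t
    have h2 : ‖w‖ * ‖t‖ ≤ ‖w‖ * R0 :=
      mul_le_mul_of_nonneg_left (hR0 t ht) (norm_nonneg w)
    have := abs_le.mp (le_trans h1 h2)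
    constructor <;> [linarith [this.1]; linarith [this.2]]
  have hnet : reluNet a b (fun i => c i • w) t = ∑ i, a i * max 0 (c i * ⟪w, t⟫ + b i) := by
    unfold reluNet
    refine Finset.sum_congr rfl fun i _ => ?_
    rw [real_inner_smul_left]
  rw [hnet]
  exact hab _ hin




private lemma reluNet_pad {n m M : ℕ} (hmM : m ≤ M) (a b : Fin m → ℝ)
    (w : Fin m → EuclideanSpace ℝ (Fin n)) :
    ∃ (a' b' : Fin M → ℝ) (w' : Fin M → EuclideanSpace ℝ (Fin n)),
      ∀ t, reluNet a' b' w' t = reluNet a b w t := by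
  classical
  set pa : ℕ → ℝ := fun i => if h : i < m then a ⟨i, h⟩ else 0 with hpa
  set pb : ℕ → ℝ := fun i => if h : i < m then b ⟨i, h⟩ else 0 with hpb
  set pw : ℕ → EuclideanSpace ℝ (Fin n) := fun i => if h : i < m then w ⟨i, h⟩ else 0 with hpw
  refine ⟨fun i => pa i.val, fun i => pb i.val, fun i => pw i.val, fun t => ?_⟩
  set f : ℕ → ℝ := fun i => pa i * max 0 (⟪pw i, t⟫ + pb i) with hf
  have hL : reluNet (fun i : Fin M => pa i.val) (fun i => pb i.val) (fun i => pw i.val) t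
      = ∑ i ∈ Finset.range M, f i := Fin.sum_univ_eq_sum_range f M
  have hR : reluNet a b w t = ∑ i ∈ Finset.range m, f i := by
    rw [← Fin.sum_univ_eq_sum_range f m]
    refine Finset.sum_congr rfl fun i _ => ?_
    simp [hf, hpa, hpb, hpw, i.isLt]
  rw [hL, hR]
  refine (Finset.sum_subset (Finset.range_subset_range.2 hmM) ?_).symm
  intro i _ hi
  rw [Finset.mem_range, not_lt] at hi
  simp [hf, hpa, Nat.not_lt.mpr hi]

/-- functions of the form `α * (cos/sin) (⟪w, ·⟫ + b)` -/
def CosForm {n : ℕ} (f : EuclideanSpace ℝ (Fin n) → ℝ) : Prop :=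
  ∃ (α b : ℝ) (w : EuclideanSpace ℝ (Fin n)) (ψ : ℝ → ℝ),
    (ψ = Real.cos ∨ ψ = Real.sin) ∧ f = fun t => α * ψ (⟪w, t⟫ + b)

private lemma cosForm_zero {n : ℕ} : CosForm (fun _ : EuclideanSpace ℝ (Fin n) => (0 : ℝ)) :=
  ⟨0, 0, 0, Real.cos, Or.inl rfl, by funext t; simp⟩

private lemma cosForm_bound {n : ℕ} {f : EuclideanSpace ℝ (Fin n) → ℝ} (hf : CosForm f) :
    ∃ C : ℝ, 0 ≤ C ∧ ∀ t, |f t| ≤ C := by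
  obtain ⟨α, b, w, ψ, hψ, rfl⟩ := hf
  refine ⟨|α|, abs_nonneg _, fun t => ?_⟩
  rw [abs_mul]
  have : |ψ (⟪w, t⟫ + b)| ≤ 1 := by
    rcases hψ with rfl | rfl
    · exact Real.abs_cos_le_one _
    · exact Real.abs_sin_le_one _
  nlinarith [abs_nonneg α]
private lemma cosForm_netApprox {n : ℕ} {X : Set (EuclideanSpace ℝ (Fin n))} (hX : IsCompact X)
    {f : EuclideanSpace ℝ (Fin n) → ℝ} (hf : CosForm f) (δ : ℝ) (hδ : 0 < δ) :
    ∃ m : ℕ, 0 < m ∧ ∃ (a b : Fin m → ℝ) (W : Fin m → EuclideanSpace ℝ (Fin n)),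
      ∀ t ∈ X, |f t - reluNet a b W t| ≤ δ := by
  obtain ⟨α, c, w, ψ, hψ, rfl⟩ := hf
  have hψc : Continuous ψ := by
    rcases hψ with rfl | rfl
    · exact Real.continuous_cos
    · exact Real.continuous_sin
  have hcont : Continuous fun x : ℝ => α * ψ (x + c) :=
    continuous_const.mul (hψc.comp (continuous_id.add continuous_const))
  obtain ⟨m, hm, a, b, W, hnet⟩ := netApproxComp hX w (fun x => α * ψ (x + c)) hcont δ hδ
  exact ⟨m, hm, a, b, W, hnet⟩

private lemma sepApprox {dt ds : ℕ} {X : Set (EuclideanSpace ℝ (Fin dt))}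
    {Y : Set (EuclideanSpace ℝ (Fin ds))} (hX : IsCompact X) (hY : IsCompact Y) (d : ℕ)
    (G : Fin d → EuclideanSpace ℝ (Fin dt) → ℝ) (H : Fin d → EuclideanSpace ℝ (Fin ds) → ℝ)
    (hG : ∀ ℓ, CosForm (G ℓ)) (hH : ∀ ℓ, CosForm (H ℓ)) (δ : ℝ) (hδ : 0 < δ) :
    ∃ m : ℕ, 0 < m ∧
      ∃ (aq bq : Fin d → Fin m → ℝ) (wq : Fin d → Fin m → EuclideanSpace ℝ (Fin dt))
        (ak bk : Fin d → Fin m → ℝ) (wk : Fin d → Fin m → EuclideanSpace ℝ (Fin ds)),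
        ∀ t ∈ X, ∀ s ∈ Y,
          |(∑ ℓ, G ℓ t * H ℓ s) -
            ∑ ℓ, reluNet (aq ℓ) (bq ℓ) (wq ℓ) t * reluNet (ak ℓ) (bk ℓ) (wk ℓ) s| ≤ δ := by
  classical
  choose BG hBG0 hBG using fun ℓ => cosForm_bound (hG ℓ)
  choose BH hBH0 hBH using fun ℓ => cosForm_bound (hH ℓ)
  set C : ℝ := 1 + (∑ ℓ, BG ℓ) + (∑ ℓ, BH ℓ) with hC
  have hsumG : ∀ ℓ, BG ℓ ≤ ∑ ℓ', BG ℓ' := fun ℓ =>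
    Finset.single_le_sum (fun ℓ' _ => hBG0 ℓ') (Finset.mem_univ ℓ)
  have hsumH : ∀ ℓ, BH ℓ ≤ ∑ ℓ', BH ℓ' := fun ℓ =>
    Finset.single_le_sum (fun ℓ' _ => hBH0 ℓ') (Finset.mem_univ ℓ)
  have hsG0 : 0 ≤ ∑ ℓ', BG ℓ' := Finset.sum_nonneg fun ℓ' _ => hBG0 ℓ'
  have hsH0 : 0 ≤ ∑ ℓ', BH ℓ' := Finset.sum_nonneg fun ℓ' _ => hBH0 ℓ'
  have hC1 : 1 ≤ C := by rw [hC]; linarith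
  have hGC : ∀ ℓ t, |G ℓ t| ≤ C := fun ℓ t => le_trans (hBG ℓ t) (by rw [hC]; linarith [hsumG ℓ])
  have hHC : ∀ ℓ s, |H ℓ s| ≤ C := fun ℓ s => le_trans (hBH ℓ s) (by rw [hC]; linarith [hsumH ℓ])
  set δ' : ℝ := min 1 (δ / (d * (2 * C + 1) + 1)) with hδ'
  have hδ'0 : 0 < δ' := by
    refine lt_min one_pos (div_pos hδ ?_)
    have : (0:ℝ) ≤ d * (2 * C + 1) := by positivity
    linarith
  choose mq hmq aq0 bq0 wq0 hq using fun ℓ => cosForm_netApprox hX (hG ℓ) δ' hδ'0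
  choose mk hmk ak0 bk0 wk0 hk using fun ℓ => cosForm_netApprox hY (hH ℓ) δ' hδ'0
  set M : ℕ := 1 + Finset.univ.sup (fun ℓ => max (mq ℓ) (mk ℓ)) with hM
  have hMq : ∀ ℓ, mq ℓ ≤ M := fun ℓ => by
    have := Finset.le_sup (f := fun ℓ => max (mq ℓ) (mk ℓ)) (Finset.mem_univ ℓ)
    beta_reduce at this
    simp only [hM]
    omega
  have hMk : ∀ ℓ, mk ℓ ≤ M := fun ℓ => by
    have := Finset.le_sup (f := fun ℓ => max (mq ℓ) (mk ℓ)) (Finset.mem_univ ℓ)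
    beta_reduce at this
    simp only [hM]
    omega
  have hM0 : 0 < M := by omega
  choose aq bq wq hpadq using fun ℓ => reluNet_pad (hMq ℓ) (aq0 ℓ) (bq0 ℓ) (wq0 ℓ)
  choose ak bk wk hpadk using fun ℓ => reluNet_pad (hMk ℓ) (ak0 ℓ) (bk0 ℓ) (wk0 ℓ)
  refine ⟨M, hM0, aq, bq, wq, ak, bk, wk, ?_⟩
  intro t ht s hs
  have key : ∀ ℓ : Fin d,
      |G ℓ t * H ℓ s - reluNet (aq ℓ) (bq ℓ) (wq ℓ) t * reluNet (ak ℓ) (bk ℓ) (wk ℓ) s|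
        ≤ (2 * C + 1) * δ' := by
    intro ℓ
    rw [hpadq ℓ, hpadk ℓ]
    set q := reluNet (aq0 ℓ) (bq0 ℓ) (wq0 ℓ) t
    set k := reluNet (ak0 ℓ) (bk0 ℓ) (wk0 ℓ) s
    have h1 : |G ℓ t - q| ≤ δ' := hq ℓ t ht
    have h2 : |H ℓ s - k| ≤ δ' := hk ℓ s hs
    have hkb : |k| ≤ C + δ' := by
      have := abs_sub_abs_le_abs_sub k (H ℓ s)
      rw [abs_sub_comm] at this
      linarith [hHC ℓ s]
    have hdecomp : G ℓ t * H ℓ s - q * k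
        = G ℓ t * (H ℓ s - k) + (G ℓ t - q) * k := by ring
    rw [hdecomp]
    have hδ'1 : δ' ≤ 1 := min_le_left _ _
    calc |G ℓ t * (H ℓ s - k) + (G ℓ t - q) * k|
        ≤ |G ℓ t * (H ℓ s - k)| + |(G ℓ t - q) * k| := abs_add_le _ _
      _ = |G ℓ t| * |H ℓ s - k| + |G ℓ t - q| * |k| := by rw [abs_mul, abs_mul]
      _ ≤ C * δ' + δ' * (C + δ') := by
          refine add_le_add (mul_le_mul (hGC ℓ t) h2 (abs_nonneg _) (by linarith)) ?_
          exact mul_le_mul h1 hkb (abs_nonneg _) hδ'0.le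
      _ ≤ (2 * C + 1) * δ' := by nlinarith
  have hsplit : (∑ ℓ, G ℓ t * H ℓ s) -
      (∑ ℓ, reluNet (aq ℓ) (bq ℓ) (wq ℓ) t * reluNet (ak ℓ) (bk ℓ) (wk ℓ) s)
      = ∑ ℓ, (G ℓ t * H ℓ s - reluNet (aq ℓ) (bq ℓ) (wq ℓ) t * reluNet (ak ℓ) (bk ℓ) (wk ℓ) s) :=
    (Finset.sum_sub_distrib _ _).symm
  rw [hsplit]
  calc |∑ ℓ, (G ℓ t * H ℓ s - reluNet (aq ℓ) (bq ℓ) (wq ℓ) t * reluNet (ak ℓ) (bk ℓ) (wk ℓ) s)|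
      ≤ ∑ ℓ, |G ℓ t * H ℓ s - reluNet (aq ℓ) (bq ℓ) (wq ℓ) t * reluNet (ak ℓ) (bk ℓ) (wk ℓ) s| :=
        Finset.abs_sum_le_sum_abs _ _
    _ ≤ ∑ _ℓ : Fin d, (2 * C + 1) * δ' := Finset.sum_le_sum fun ℓ _ => key ℓ
    _ = d * ((2 * C + 1) * δ') := by rw [Finset.sum_const, Finset.card_univ, Fintype.card_fin]; ring
    _ ≤ δ := by
        have h1 : δ' ≤ δ / (d * (2 * C + 1) + 1) := min_le_right _ _
        have h2 : (0:ℝ) ≤ d * (2 * C + 1) := by positivity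
        have h3 : 0 < d * (2 * C + 1) + 1 := by linarith
        rw [le_div_iff₀ h3] at h1
        nlinarith



private noncomputable def cosMap {dt ds : ℕ} (X : Set (EuclideanSpace ℝ (Fin dt)))
    (Y : Set (EuclideanSpace ℝ (Fin ds))) (w : EuclideanSpace ℝ (Fin dt))
    (v : EuclideanSpace ℝ (Fin ds)) (b : ℝ) : C(↥(X ×ˢ Y), ℝ) :=
  ⟨fun p => Real.cos (⟪w, (↑p : EuclideanSpace ℝ (Fin dt) × EuclideanSpace ℝ (Fin ds)).1⟫ + ⟪v, (↑p : EuclideanSpace ℝ (Fin dt) × EuclideanSpace ℝ (Fin ds)).2⟫ + b), by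
    refine Real.continuous_cos.comp (Continuous.add (Continuous.add ?_ ?_) continuous_const)
    · exact continuous_const.inner continuous_subtype_val.fst
    · exact continuous_const.inner continuous_subtype_val.snd⟩

@[simp] private lemma cosMap_apply {dt ds : ℕ} (X : Set (EuclideanSpace ℝ (Fin dt)))
    (Y : Set (EuclideanSpace ℝ (Fin ds))) (w : EuclideanSpace ℝ (Fin dt))
    (v : EuclideanSpace ℝ (Fin ds)) (b : ℝ) (p : ↥(X ×ˢ Y)) :
    cosMap X Y w v b p
      = Real.cos (⟪w, (↑p : EuclideanSpace ℝ (Fin dt) × EuclideanSpace ℝ (Fin ds)).1⟫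
          + ⟪v, (↑p : EuclideanSpace ℝ (Fin dt) × EuclideanSpace ℝ (Fin ds)).2⟫ + b) := rfl

private lemma cosProd (a c : ℝ) :
    Real.cos a * Real.cos c = 1 / 2 * Real.cos (a + c) + 1 / 2 * Real.cos (a - c) := by
  rw [Real.cos_add, Real.cos_sub]; ring

private lemma sepCos (c c' : ℝ) (h : c ≠ c') :
    ∃ lam b : ℝ, Real.cos (lam * c + b) ≠ Real.cos (lam * c' + b) := by
  set lam : ℝ := 1 / (|c| + |c'| + 1) with hlam
  have hden : 0 < |c| + |c'| + 1 := by positivity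
  have hlam0 : 0 < lam := by positivity
  refine ⟨lam, Real.pi / 2, fun heq => ?_⟩
  have hbc : |lam * c| ≤ 1 := by
    rw [abs_mul, abs_of_pos hlam0, hlam]
    rw [div_mul_eq_mul_div, div_le_one hden]
    have := abs_nonneg c'
    linarith [abs_nonneg c]
  have hbc' : |lam * c'| ≤ 1 := by
    rw [abs_mul, abs_of_pos hlam0, hlam]
    rw [div_mul_eq_mul_div, div_le_one hden]
    linarith [abs_nonneg c]
  have hpi : (2 : ℝ) ≤ Real.pi / 2 * 2 := by linarith [Real.pi_gt_three]
  have h1 : lam * c + Real.pi / 2 ∈ Set.Icc 0 Real.pi := by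
    have := abs_le.mp hbc
    constructor <;> nlinarith [Real.pi_gt_three]
  have h2 : lam * c' + Real.pi / 2 ∈ Set.Icc 0 Real.pi := by
    have := abs_le.mp hbc'
    constructor <;> nlinarith [Real.pi_gt_three]
  have := Real.injOn_cos h1 h2 heq
  have : lam * c = lam * c' := by linarith
  exact h (mul_left_cancel₀ hlam0.ne' this)

private lemma cosSepApprox {dt ds : ℕ} {X : Set (EuclideanSpace ℝ (Fin dt))}
    {Y : Set (EuclideanSpace ℝ (Fin ds))} (hX : IsCompact X) (hY : IsCompact Y)
    (f : EuclideanSpace ℝ (Fin dt) × EuclideanSpace ℝ (Fin ds) → ℝ)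
    (hf : ContinuousOn f (X ×ˢ Y)) (η : ℝ) (hη : 0 < η) :
    ∃ d : ℕ, 0 < d ∧
      ∃ (G : Fin d → EuclideanSpace ℝ (Fin dt) → ℝ)
        (H : Fin d → EuclideanSpace ℝ (Fin ds) → ℝ),
        (∀ ℓ, CosForm (G ℓ)) ∧ (∀ ℓ, CosForm (H ℓ)) ∧
        ∀ t ∈ X, ∀ s ∈ Y, |f (t, s) - ∑ ℓ, G ℓ t * H ℓ s| ≤ η := by
  classical
  have hKc : IsCompact (X ×ˢ Y) := hX.prod hY
  haveI : CompactSpace ↥(X ×ˢ Y) := isCompact_iff_compactSpace.mp hKc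
  set S : Set C(↥(X ×ˢ Y), ℝ) := {g | ∃ w v b, g = cosMap X Y w v b} with hS
  -- products of generators stay in the span
  have hmulS : ∀ g1 ∈ S, ∀ g2 ∈ S, g1 * g2 ∈ Submodule.span ℝ S := by
    rintro _ ⟨w1, v1, b1, rfl⟩ _ ⟨w2, v2, b2, rfl⟩
    have key : cosMap X Y w1 v1 b1 * cosMap X Y w2 v2 b2
        = (1/2 : ℝ) • cosMap X Y (w1 + w2) (v1 + v2) (b1 + b2)
          + (1/2 : ℝ) • cosMap X Y (w1 - w2) (v1 - v2) (b1 - b2) := by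
      ext p
      simp only [ContinuousMap.mul_apply, ContinuousMap.add_apply, ContinuousMap.smul_apply,
        smul_eq_mul, cosMap_apply]
      rw [inner_add_left, inner_add_left, inner_sub_left, inner_sub_left]
      set x1 := ⟪w1, (↑p : EuclideanSpace ℝ (Fin dt) × EuclideanSpace ℝ (Fin ds)).1⟫
      set x2 := ⟪w2, (↑p : EuclideanSpace ℝ (Fin dt) × EuclideanSpace ℝ (Fin ds)).1⟫
      set y1 := ⟪v1, (↑p : EuclideanSpace ℝ (Fin dt) × EuclideanSpace ℝ (Fin ds)).2⟫
      set y2 := ⟪v2, (↑p : EuclideanSpace ℝ (Fin dt) × EuclideanSpace ℝ (Fin ds)).2⟫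
      have e1 : x1 + x2 + (y1 + y2) + (b1 + b2) = (x1 + y1 + b1) + (x2 + y2 + b2) := by ring
      have e2 : x1 - x2 + (y1 - y2) + (b1 - b2) = (x1 + y1 + b1) - (x2 + y2 + b2) := by ring
      rw [e1, e2]
      exact cosProd _ _
    rw [key]
    refine Submodule.add_mem _ ?_ ?_ <;>
      exact Submodule.smul_mem _ _ (Submodule.subset_span ⟨_, _, _, rfl⟩)
  have hone : (1 : C(↥(X ×ˢ Y), ℝ)) ∈ S := by
    refine ⟨0, 0, 0, ?_⟩
    ext p
    simp [cosMap]
  have hsub : ↑(Submonoid.closure S) ⊆ (Submodule.span ℝ S : Set C(↥(X ×ˢ Y), ℝ)) := by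
    intro x hx
    induction hx using Submonoid.closure_induction with
    | mem x hxS => exact Submodule.subset_span hxS
    | one => exact Submodule.subset_span hone
    | mul x y hx hy hxs hys =>
        have hle : Submodule.span ℝ S * Submodule.span ℝ S ≤ Submodule.span ℝ S := by
          rw [Submodule.span_mul_span]
          refine Submodule.span_le.mpr ?_
          rintro _ ⟨g1, hg1, g2, hg2, rfl⟩
          exact hmulS g1 hg1 g2 hg2
        exact hle (Submodule.mul_mem_mul hxs hys)
  set A : Subalgebra ℝ C(↥(X ×ˢ Y), ℝ) := Algebra.adjoin ℝ S with hA
  have hAspan : Subalgebra.toSubmodule A = Submodule.span ℝ S :=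
    Algebra.adjoin_eq_span_of_subset (R := ℝ) hsub
  -- separates points
  have hsep : A.SeparatesPoints := by
    intro p q hpq
    have hpq' : (↑p : EuclideanSpace ℝ (Fin dt) × EuclideanSpace ℝ (Fin ds)) ≠ ↑q :=
      fun h => hpq (Subtype.ext h)
    rcases Prod.ext_iff.not.mp hpq' |> not_and_or.mp with hne | hne
    · -- first coordinates differ
      set w : EuclideanSpace ℝ (Fin dt) := (↑p : EuclideanSpace ℝ (Fin dt) × EuclideanSpace ℝ (Fin ds)).1 - (↑q : EuclideanSpace ℝ (Fin dt) × EuclideanSpace ℝ (Fin ds)).1 with hw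
      have hw0 : w ≠ 0 := sub_ne_zero.mpr hne
      have hcc : ⟪w, (↑p : EuclideanSpace ℝ (Fin dt) × EuclideanSpace ℝ (Fin ds)).1⟫ ≠ ⟪w, (↑q : EuclideanSpace ℝ (Fin dt) × EuclideanSpace ℝ (Fin ds)).1⟫ := by
        intro h
        have : ⟪w, w⟫ = 0 := by rw [hw, inner_sub_right, h]; ring
        exact hw0 ((@inner_self_eq_zero ℝ _ _ _ _ w).mp this)
      obtain ⟨lam, b, hne2⟩ := sepCos _ _ hcc
      refine ⟨(cosMap X Y (lam • w) 0 b : C(↥(X ×ˢ Y), ℝ)),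
        ⟨cosMap X Y (lam • w) 0 b, Algebra.subset_adjoin ⟨_, _, _, rfl⟩, rfl⟩, ?_⟩
      simp only [cosMap_apply, inner_zero_left, real_inner_smul_left, add_zero]
      exact hne2
    · set w : EuclideanSpace ℝ (Fin ds) := (↑p : EuclideanSpace ℝ (Fin dt) × EuclideanSpace ℝ (Fin ds)).2 - (↑q : EuclideanSpace ℝ (Fin dt) × EuclideanSpace ℝ (Fin ds)).2 with hw
      have hw0 : w ≠ 0 := sub_ne_zero.mpr hne
      have hcc : ⟪w, (↑p : EuclideanSpace ℝ (Fin dt) × EuclideanSpace ℝ (Fin ds)).2⟫ ≠ ⟪w, (↑q : EuclideanSpace ℝ (Fin dt) × EuclideanSpace ℝ (Fin ds)).2⟫ := by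
        intro h
        have : ⟪w, w⟫ = 0 := by rw [hw, inner_sub_right, h]; ring
        exact hw0 ((@inner_self_eq_zero ℝ _ _ _ _ w).mp this)
      obtain ⟨lam, b, hne2⟩ := sepCos _ _ hcc
      refine ⟨(cosMap X Y 0 (lam • w) b : C(↥(X ×ˢ Y), ℝ)),
        ⟨cosMap X Y 0 (lam • w) b, Algebra.subset_adjoin ⟨_, _, _, rfl⟩, rfl⟩, ?_⟩
      simp only [cosMap_apply, inner_zero_left, real_inner_smul_left, zero_add]
      exact hne2
  -- Stone-Weierstrass
  have hfres : Continuous ((X ×ˢ Y).restrict f) := hf.restrict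
  obtain ⟨g, hg⟩ := ContinuousMap.exists_mem_subalgebra_near_continuous_of_separatesPoints
    A hsep ((X ×ˢ Y).restrict f) hfres η hη
  have hgspan : (g : C(↥(X ×ˢ Y), ℝ)) ∈ Submodule.span ℝ S := by
    rw [← hAspan]
    exact g.2
  rw [Submodule.mem_span_set'] at hgspan
  obtain ⟨n, coef, gs, hgsum⟩ := hgspan
  have hparams : ∀ i, ∃ w v b, (gs i : C(↥(X ×ˢ Y), ℝ)) = cosMap X Y w v b := fun i => (gs i).2
  choose w v b hwvb using hparams
  -- build the separable family
  set GA : Fin n → EuclideanSpace ℝ (Fin dt) → ℝ :=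
    fun i t => coef i * Real.cos (⟪w i, t⟫ + b i) with hGA
  set GB : Fin n → EuclideanSpace ℝ (Fin dt) → ℝ :=
    fun i t => -(coef i) * Real.sin (⟪w i, t⟫ + b i) with hGB
  set HA : Fin n → EuclideanSpace ℝ (Fin ds) → ℝ := fun i s => Real.cos ⟪v i, s⟫ with hHA
  set HB : Fin n → EuclideanSpace ℝ (Fin ds) → ℝ := fun i s => Real.sin ⟪v i, s⟫ with hHB
  refine ⟨n + n + 1, by omega,
    Fin.append (Fin.append GA GB) (fun _ => fun _ => 0),
    Fin.append (Fin.append HA HB) (fun _ => fun _ => 0), ?_, ?_, ?_⟩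
  · intro ℓ
    induction ℓ using Fin.addCases with
    | left i =>
        rw [Fin.append_left]
        induction i using Fin.addCases with
        | left j =>
            rw [Fin.append_left]
            exact ⟨coef j, b j, w j, Real.cos, Or.inl rfl, rfl⟩
        | right j =>
            rw [Fin.append_right]
            exact ⟨-(coef j), b j, w j, Real.sin, Or.inr rfl, rfl⟩
    | right i =>
        rw [Fin.append_right]
        exact cosForm_zero
  · intro ℓ
    induction ℓ using Fin.addCases with
    | left i =>
        rw [Fin.append_left]
        induction i using Fin.addCases with
        | left j =>
            rw [Fin.append_left]
            exact ⟨1, 0, v j, Real.cos, Or.inl rfl, by funext s; rw [hHA]; simp⟩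
        | right j =>
            rw [Fin.append_right]
            exact ⟨1, 0, v j, Real.sin, Or.inr rfl, by funext s; rw [hHB]; simp⟩
    | right i =>
        rw [Fin.append_right]
        exact cosForm_zero
  · intro t ht s hs
    have hp : (t, s) ∈ X ×ˢ Y := ⟨ht, hs⟩
    set p : ↥(X ×ˢ Y) := ⟨(t, s), hp⟩ with hpdef
    have hsum : (∑ ℓ : Fin (n + n + 1),
        Fin.append (Fin.append GA GB) (fun _ => fun _ => (0:ℝ)) ℓ t *
        Fin.append (Fin.append HA HB) (fun _ => fun _ => (0:ℝ)) ℓ s)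
        = ∑ i : Fin n, (GA i t * HA i s + GB i t * HB i s) := by
      rw [Fin.sum_univ_add, Fin.sum_univ_add]
      simp only [Fin.append_left, Fin.append_right]
      simp [Finset.sum_add_distrib]
    have hterm : ∀ i : Fin n, GA i t * HA i s + GB i t * HB i s
        = coef i * Real.cos (⟪w i, t⟫ + ⟪v i, s⟫ + b i) := by
      intro i
      rw [hGA, hGB, hHA, hHB]
      have e : ⟪w i, t⟫ + ⟪v i, s⟫ + b i = (⟪w i, t⟫ + b i) + ⟪v i, s⟫ := by ring
      rw [e, Real.cos_add]
      ring
    have hgp : (g : C(↥(X ×ˢ Y), ℝ)) p = ∑ i : Fin n, coef i * Real.cos (⟪w i, t⟫ + ⟪v i, s⟫ + b i) := by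
      rw [← hgsum]
      rw [ContinuousMap.sum_apply]
      refine Finset.sum_congr rfl fun i _ => ?_
      rw [ContinuousMap.smul_apply, hwvb i, smul_eq_mul, cosMap_apply]
    have hclose := hg p
    rw [Real.norm_eq_abs] at hclose
    have : (X ×ˢ Y).restrict f p = f (t, s) := rfl
    rw [this, hgp] at hclose
    rw [hsum, Finset.sum_congr rfl fun i _ => hterm i]
    rw [abs_sub_comm]
    exact hclose.le




private lemma cosForm_smul {n : ℕ} (r : ℝ) {f : EuclideanSpace ℝ (Fin n) → ℝ}
    (hf : CosForm f) : CosForm (fun t => r * f t) := by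
  obtain ⟨α, b, w, ψ, hψ, rfl⟩ := hf
  exact ⟨r * α, b, w, ψ, hψ, by funext t; ring⟩

theorem stmt_4 (dt ds : ℕ)
    (X : Set (EuclideanSpace ℝ (Fin dt))) (Y : Set (EuclideanSpace ℝ (Fin ds)))
    (hX : IsCompact X) (hY : IsCompact Y)
    (F : EuclideanSpace ℝ (Fin dt) × EuclideanSpace ℝ (Fin ds) → ℝ)
    (hF : ContinuousOn F (X ×ˢ Y))
    (hFpos : ∀ t ∈ X, ∀ s ∈ Y, 0 < F (t, s))
    (ε : ℝ) (hε : 0 < ε) :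
    ∃ d m : ℕ, 0 < d ∧ 0 < m ∧
      ∃ (aq bq : Fin d → Fin m → ℝ) (wq : Fin d → Fin m → EuclideanSpace ℝ (Fin dt))
        (ak bk : Fin d → Fin m → ℝ) (wk : Fin d → Fin m → EuclideanSpace ℝ (Fin ds)),
        ∀ t ∈ X, ∀ s ∈ Y,
          |F (t, s) -
            Real.exp ((∑ ℓ, reluNet (aq ℓ) (bq ℓ) (wq ℓ) t * reluNet (ak ℓ) (bk ℓ) (wk ℓ) s)
              / Real.sqrt d)| < ε := by
  classical
  obtain ⟨M0, hM0⟩ := (hX.prod hY).exists_bound_of_continuousOn hF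
  set M : ℝ := max M0 1 with hM
  have hM1 : (1 : ℝ) ≤ M := le_max_right _ _
  have hMpos : (0 : ℝ) < M := lt_of_lt_of_le one_pos hM1
  have hFM : ∀ p ∈ X ×ˢ Y, F p ≤ M := fun p hp =>
    le_trans (le_trans (le_abs_self _) ((Real.norm_eq_abs _) ▸ hM0 p hp)) (le_max_left _ _)
  set η : ℝ := min 1 (ε / (4 * M)) with hη
  have hη0 : 0 < η := lt_min one_pos (div_pos hε (by linarith))
  have hη1 : η ≤ 1 := min_le_left _ _
  have hηε : η ≤ ε / (4 * M) := min_le_right _ _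
  have hlog : ContinuousOn (fun p => Real.log (F p)) (X ×ˢ Y) := by
    refine hF.log fun p hp => ?_
    have := hFpos p.1 hp.1 p.2 hp.2
    simp only [Prod.mk.eta] at this
    exact this.ne'
  obtain ⟨d, hd0, G, H, hGcos, hHcos, happx⟩ :=
    cosSepApprox hX hY (fun p => Real.log (F p)) hlog (η / 2) (by positivity)
  set sd : ℝ := Real.sqrt d with hsd
  have hsd1 : 1 ≤ sd := by
    rw [hsd, show (1:ℝ) = Real.sqrt 1 from (Real.sqrt_one).symm]
    exact Real.sqrt_le_sqrt (by exact_mod_cast hd0)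
  have hsd0 : (0 : ℝ) < sd := lt_of_lt_of_le one_pos hsd1
  obtain ⟨m, hm0, aq, bq, wq, ak, bk, wk, hnet⟩ :=
    sepApprox hX hY d (fun ℓ t => sd * G ℓ t) H
      (fun ℓ => cosForm_smul sd (hGcos ℓ)) hHcos (η / 2) (by positivity)
  refine ⟨d, m, hd0, hm0, aq, bq, wq, ak, bk, wk, ?_⟩
  intro t ht s hs
  set T : ℝ := ∑ ℓ, reluNet (aq ℓ) (bq ℓ) (wq ℓ) t * reluNet (ak ℓ) (bk ℓ) (wk ℓ) s with hT
  set L : ℝ := Real.log (F (t, s)) with hL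
  have hnet' := hnet t ht s hs
  have hGsum : (∑ ℓ, (fun ℓ t => sd * G ℓ t) ℓ t * H ℓ s) = sd * ∑ ℓ, G ℓ t * H ℓ s := by
    rw [Finset.mul_sum]
    exact Finset.sum_congr rfl fun ℓ _ => by ring
  rw [hGsum] at hnet'
  have h1 : |(∑ ℓ, G ℓ t * H ℓ s) - T / sd| ≤ η / 2 := by
    have he : (sd * (∑ ℓ, G ℓ t * H ℓ s) - T) / sd = (∑ ℓ, G ℓ t * H ℓ s) - T / sd := by
      rw [sub_div, mul_div_cancel_left₀ _ hsd0.ne']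
    rw [← he, abs_div, abs_of_pos hsd0]
    exact le_trans (div_le_self (abs_nonneg _) hsd1) hnet'
  have h2 : |L - T / sd| ≤ η := by
    have ha := happx t ht s hs
    calc |L - T / sd| = |(L - ∑ ℓ, G ℓ t * H ℓ s) + ((∑ ℓ, G ℓ t * H ℓ s) - T / sd)| := by
          ring_nf
      _ ≤ |L - ∑ ℓ, G ℓ t * H ℓ s| + |(∑ ℓ, G ℓ t * H ℓ s) - T / sd| := abs_add_le _ _
      _ ≤ η / 2 + η / 2 := add_le_add ha h1
      _ = η := by ring
  have hFp : 0 < F (t, s) := hFpos t ht s hs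
  have hexp : F (t, s) = Real.exp L := (Real.exp_log hFp).symm
  have hu : |T / sd - L| ≤ 1 := le_trans (abs_sub_comm L (T / sd) ▸ h2) hη1
  have hsplit : Real.exp (T / sd) = Real.exp L * Real.exp (T / sd - L) := by
    rw [← Real.exp_add]
    ring_nf
  have key : |F (t, s) - Real.exp (T / sd)| ≤ 2 * M * η := by
    rw [hexp, hsplit]
    have he : Real.exp L - Real.exp L * Real.exp (T / sd - L)
        = -(Real.exp L * (Real.exp (T / sd - L) - 1)) := by ring
    rw [he, abs_neg, abs_mul, abs_of_pos (Real.exp_pos L)]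
    have hb := Real.abs_exp_sub_one_le hu
    have hL2 : Real.exp L ≤ M := hexp ▸ hFM (t, s) ⟨ht, hs⟩
    have h3 : |T / sd - L| ≤ η := abs_sub_comm L (T / sd) ▸ h2
    calc Real.exp L * |Real.exp (T / sd - L) - 1| ≤ M * (2 * |T / sd - L|) :=
          mul_le_mul hL2 hb (abs_nonneg _) (by linarith [Real.exp_pos L, hL2])
      _ ≤ M * (2 * η) := by nlinarith
      _ = 2 * M * η := by ring
  have : 2 * M * η ≤ ε / 2 := by
    have := mul_le_mul_of_nonneg_left hηε (by linarith : (0:ℝ) ≤ 2 * M)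
    calc 2 * M * η ≤ 2 * M * (ε / (4 * M)) := this
      _ = ε / 2 := by field_simp; ring
  calc |F (t, s) - Real.exp (T / sd)| ≤ 2 * M * η := key
    _ ≤ ε / 2 := this
    _ < ε := by linarith
end

section
/- Let d be a positive integer and q, k ∈ ℝ^d. Then the family indexed by multi-indices p : {1, …, d} → ℕ given by (∏_{ℓ=1}^{d} q_ℓ^{p_ℓ}/√(p_ℓ!)) · (∏_{ℓ=1}^{d} k_ℓ^{p_ℓ}/√(p_ℓ!)) is (unconditionally) summable, and its sum equals exp(⟨q, k⟩), where ⟨q, k⟩ = Σ_{ℓ=1}^{d} q_ℓ k_ℓ. -/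
private lemma aux_pi_tsum : ∀ (d : ℕ) (f : Fin d → ℕ → ℝ),
    (∀ i, Summable fun n => ‖f i n‖) →
    Summable (fun p : Fin d → ℕ => ‖∏ i, f i (p i)‖) ∧
    ∑' p : Fin d → ℕ, ∏ i, f i (p i) = ∏ i, ∑' n, f i n := by
  intro d
  induction d with
  | zero =>
    intro f hf
    constructor
    · exact Summable.of_finite
    · simp only [Finset.univ_eq_empty, Finset.prod_empty]
      rw [tsum_const, Nat.card_unique, one_smul]
  | succ d ih =>
    intro f hf
    let e := Fin.consEquiv (fun _ : Fin (d + 1) => ℕ)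
    obtain ⟨ht, hs⟩ := ih (fun i => f i.succ) (fun i => hf i.succ)
    have key : ∀ z : ℕ × (Fin d → ℕ),
        (∏ i, f i (e z i)) = f 0 z.1 * ∏ i, f i.succ (z.2 i) := by
      intro z
      rw [Fin.prod_univ_succ]
      simp [e, Fin.consEquiv]
    have hnorm1 := hf 0
    have hmul : Summable (fun z : ℕ × (Fin d → ℕ) =>
        ‖f 0 z.1 * ∏ i, f i.succ (z.2 i)‖) := by
      simpa [norm_mul] using (hnorm1.mul_of_nonneg ht (fun _ => norm_nonneg _)
        (fun _ => norm_nonneg _))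
    constructor
    · have := hmul.comp_injective e.symm.injective
      refine this.congr fun p => ?_
      simp only [Function.comp]
      rw [← key (e.symm p), Equiv.apply_symm_apply]
    · rw [← e.tsum_eq]
      have : (fun z : ℕ × (Fin d → ℕ) => ∏ i, f i (e z i))
          = fun z : ℕ × (Fin d → ℕ) => f 0 z.1 * ∏ i, f i.succ (z.2 i) :=
        funext key
      rw [this, Fin.prod_univ_succ, ← hs,
        ← tsum_mul_tsum_of_summable_norm hnorm1 ht]

theorem stmt_6 (d : ℕ) (hd : 0 < d) (q k : Fin d → ℝ) :
    Summable (fun p : Fin d → ℕ =>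
      (∏ ℓ, q ℓ ^ p ℓ / Real.sqrt (Nat.factorial (p ℓ))) *
      (∏ ℓ, k ℓ ^ p ℓ / Real.sqrt (Nat.factorial (p ℓ)))) ∧
    ∑' p : Fin d → ℕ,
      (∏ ℓ, q ℓ ^ p ℓ / Real.sqrt (Nat.factorial (p ℓ))) *
      (∏ ℓ, k ℓ ^ p ℓ / Real.sqrt (Nat.factorial (p ℓ)))
      = Real.exp (∑ ℓ, q ℓ * k ℓ) := by
  set f : Fin d → ℕ → ℝ := fun ℓ n => (q ℓ * k ℓ) ^ n / n.factorial with hfdef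
  have hterm : ∀ p : Fin d → ℕ,
      (∏ ℓ, q ℓ ^ p ℓ / Real.sqrt (Nat.factorial (p ℓ))) *
      (∏ ℓ, k ℓ ^ p ℓ / Real.sqrt (Nat.factorial (p ℓ))) = ∏ ℓ, f ℓ (p ℓ) := by
    intro p
    rw [← Finset.prod_mul_distrib]
    refine Finset.prod_congr rfl fun ℓ _ => ?_
    rw [hfdef, div_mul_div_comm, ← mul_pow, Real.mul_self_sqrt (Nat.cast_nonneg _)]
  have hf : ∀ ℓ, Summable fun n => ‖f ℓ n‖ := by
    intro ℓ
    have := Real.summable_pow_div_factorial (q ℓ * k ℓ)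
    refine (Real.summable_pow_div_factorial |q ℓ * k ℓ|).congr fun n => ?_
    simp [hfdef, abs_div, abs_pow, abs_mul]
  obtain ⟨hs, ht⟩ := aux_pi_tsum d f hf
  have hexp : ∀ ℓ, ∑' n, f ℓ n = Real.exp (q ℓ * k ℓ) := by
    intro ℓ
    rw [Real.exp_eq_exp_ℝ, NormedSpace.exp_eq_tsum_div]
  constructor
  · exact (hs.of_norm.congr fun p => (hterm p).symm)
  · calc ∑' p : Fin d → ℕ,
        (∏ ℓ, q ℓ ^ p ℓ / Real.sqrt (Nat.factorial (p ℓ))) *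
        (∏ ℓ, k ℓ ^ p ℓ / Real.sqrt (Nat.factorial (p ℓ)))
        = ∑' p : Fin d → ℕ, ∏ ℓ, f ℓ (p ℓ) := by
          exact tsum_congr hterm
      _ = ∏ ℓ, ∑' n, f ℓ n := ht
      _ = ∏ ℓ, Real.exp (q ℓ * k ℓ) := Finset.prod_congr rfl fun ℓ _ => hexp ℓ
      _ = Real.exp (∑ ℓ, q ℓ * k ℓ) := (Real.exp_sum _ _).symm
end

section
/- Let d, d_t, d_s be positive integers, W^Q a real d × d_t matrix, W^K a real d × d_s matrix, t ∈ ℝ^{d_t} and s ∈ ℝ^{d_s}, and set q = W^Q t ∈ ℝ^d and k = W^K s ∈ ℝ^d. Then the family indexed by multi-indices p : {1, …, d} → ℕ given by (∏_{ℓ=1}^{d} (q_ℓ/d^{1/4})^{p_ℓ}/√(p_ℓ!)) · (∏_{ℓ=1}^{d} (k_ℓ/d^{1/4})^{p_ℓ}/√(p_ℓ!)) is (unconditionally) summable, and its sum equals exp(⟨W^Q t, W^K s⟩/√d), the exponentiated query-key kernel of scaled dot-product attention. -/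
set_option maxHeartbeats 800000

open Finset

lemma aux_pi_hasSum : ∀ (n : ℕ) (f : Fin n → ℕ → ℝ), (∀ i, Summable fun m => |f i m|) →
    Summable (fun p : Fin n → ℕ => |∏ i, f i (p i)|) ∧
    HasSum (fun p : Fin n → ℕ => ∏ i, f i (p i)) (∏ i, ∑' m, f i m) := by
  intro n
  induction n with
  | zero =>
    intro f _
    refine ⟨(hasSum_fintype _).summable, ?_⟩
    have := hasSum_fintype (fun p : Fin 0 → ℕ => ∏ i, f i (p i))
    simpa using this
  | succ n ih =>
    intro f hf
    obtain ⟨hS, hH⟩ := ih (fun i => f i.succ) (fun i => hf i.succ)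
    have h0 : Summable fun m => ‖f 0 m‖ := by simpa only [Real.norm_eq_abs] using hf 0
    have hS' : Summable fun q : Fin n → ℕ => ‖∏ i : Fin n, f i.succ (q i)‖ := by
      simpa only [Real.norm_eq_abs] using hS
    have h0' : HasSum (f 0) (∑' m, f 0 m) := (h0.of_norm).hasSum
    have hmulnorm := h0.mul_norm hS'
    have hsum2 : Summable (fun z : ℕ × (Fin n → ℕ) => f 0 z.1 * ∏ i : Fin n, f i.succ (z.2 i)) :=
      hmulnorm.of_norm
    have hmul : HasSum (fun z : ℕ × (Fin n → ℕ) => f 0 z.1 * ∏ i : Fin n, f i.succ (z.2 i))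
        ((∑' m, f 0 m) * ∏ i : Fin n, ∑' m, f i.succ m) :=
      HasSum.mul (f := f 0) (g := fun p : Fin n → ℕ => ∏ i : Fin n, f i.succ (p i)) h0' hH hsum2
    set e : (ℕ × (Fin n → ℕ)) ≃ (Fin (n+1) → ℕ) := Fin.consEquiv (fun _ => ℕ) with he
    have hcomp : ∀ z : ℕ × (Fin n → ℕ),
        (∏ i : Fin (n+1), f i (e z i)) = f 0 z.1 * ∏ i : Fin n, f i.succ (z.2 i) := by
      intro z
      simp [he, Fin.prod_univ_succ, Fin.consEquiv, Fin.cons_zero, Fin.cons_succ]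
    constructor
    · rw [← e.summable_iff]
      refine (hmulnorm.congr ?_)
      intro z
      simp only [Function.comp, Real.norm_eq_abs, hcomp z]
    · rw [← e.hasSum_iff, Fin.prod_univ_succ]
      exact hmul.congr_fun fun z => hcomp z

lemma exp_tsum' (x : ℝ) : ∑' n : ℕ, x ^ n / (Nat.factorial n : ℝ) = Real.exp x := by
  rw [Real.exp_eq_exp_ℝ, NormedSpace.exp_eq_tsum_div]

theorem stmt_7 (d dt ds : ℕ) (hd : 0 < d) (hdt : 0 < dt) (hds : 0 < ds)
    (WQ : Matrix (Fin d) (Fin dt) ℝ) (WK : Matrix (Fin d) (Fin ds) ℝ)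
    (t : Fin dt → ℝ) (s : Fin ds → ℝ) :
    Summable (fun p : Fin d → ℕ =>
      (∏ ℓ, (WQ.mulVec t ℓ / (d : ℝ) ^ ((1 : ℝ) / 4)) ^ p ℓ / Real.sqrt (Nat.factorial (p ℓ))) *
      (∏ ℓ, (WK.mulVec s ℓ / (d : ℝ) ^ ((1 : ℝ) / 4)) ^ p ℓ / Real.sqrt (Nat.factorial (p ℓ)))) ∧
    ∑' p : Fin d → ℕ,
      (∏ ℓ, (WQ.mulVec t ℓ / (d : ℝ) ^ ((1 : ℝ) / 4)) ^ p ℓ / Real.sqrt (Nat.factorial (p ℓ))) *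
      (∏ ℓ, (WK.mulVec s ℓ / (d : ℝ) ^ ((1 : ℝ) / 4)) ^ p ℓ / Real.sqrt (Nat.factorial (p ℓ)))
      = Real.exp ((∑ ℓ, WQ.mulVec t ℓ * WK.mulVec s ℓ) / Real.sqrt d) := by
  set q : Fin d → ℝ := WQ.mulVec t with hq
  set k : Fin d → ℝ := WK.mulVec s with hk
  set c : ℝ := (d : ℝ) ^ ((1 : ℝ) / 4) with hc
  have hdpos : (0 : ℝ) < d := by exact_mod_cast hd
  have hcc : c * c = Real.sqrt d := by
    rw [hc, ← Real.rpow_add hdpos, Real.sqrt_eq_rpow]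
    norm_num
  set a : Fin d → ℝ := fun ℓ => q ℓ * k ℓ / Real.sqrt d with ha
  set f : Fin d → ℕ → ℝ := fun ℓ n => a ℓ ^ n / (Nat.factorial n : ℝ) with hfdef
  have hpt : ∀ p : Fin d → ℕ,
      (∏ ℓ, (q ℓ / c) ^ p ℓ / Real.sqrt (Nat.factorial (p ℓ))) *
      (∏ ℓ, (k ℓ / c) ^ p ℓ / Real.sqrt (Nat.factorial (p ℓ)))
      = ∏ ℓ, f ℓ (p ℓ) := by
    intro p
    rw [← Finset.prod_mul_distrib]
    refine Finset.prod_congr rfl fun ℓ _ => ?_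
    have hfact : Real.sqrt (Nat.factorial (p ℓ)) * Real.sqrt (Nat.factorial (p ℓ))
        = (Nat.factorial (p ℓ) : ℝ) :=
      Real.mul_self_sqrt (by positivity)
    rw [hfdef]
    simp only [ha]
    rw [div_mul_div_comm, ← mul_pow, div_mul_div_comm, hfact, hcc]
  have hsummand : ∀ ℓ, Summable fun m => |f ℓ m| := by
    intro ℓ
    refine (Real.summable_pow_div_factorial |a ℓ|).congr fun n => ?_
    simp [hfdef, abs_div, abs_pow, Nat.abs_cast, div_pow]
  obtain ⟨habs, hH⟩ := aux_pi_hasSum d f hsummand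
  have hsum : Summable (fun p : Fin d → ℕ =>
      (∏ ℓ, (q ℓ / c) ^ p ℓ / Real.sqrt (Nat.factorial (p ℓ))) *
      (∏ ℓ, (k ℓ / c) ^ p ℓ / Real.sqrt (Nat.factorial (p ℓ)))) :=
    hH.summable.congr fun p => (hpt p).symm
  refine ⟨hsum, ?_⟩
  have htsum : ∑' p : Fin d → ℕ,
      (∏ ℓ, (q ℓ / c) ^ p ℓ / Real.sqrt (Nat.factorial (p ℓ))) *
      (∏ ℓ, (k ℓ / c) ^ p ℓ / Real.sqrt (Nat.factorial (p ℓ)))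
      = ∏ ℓ, ∑' m, f ℓ m := by
    rw [tsum_congr hpt]
    exact hH.tsum_eq
  rw [htsum]
  have : ∀ ℓ, (∑' m, f ℓ m) = Real.exp (a ℓ) := fun ℓ => exp_tsum' (a ℓ)
  rw [Finset.prod_congr rfl fun ℓ _ => this ℓ, ← Real.exp_sum]
  congr 1
  rw [ha, ← Finset.sum_div]
end

section
/- Let d be a positive integer and q ∈ ℝ^d. Then the family indexed by multi-indices p : {1, …, d} → ℕ given by (∏_{ℓ=1}^{d} q_ℓ^{p_ℓ}/√(p_ℓ!))² is summable, and its sum equals exp(‖q‖²), where ‖q‖² = Σ_{ℓ=1}^{d} q_ℓ². In particular, the exponential feature vector Φ(q) = (∏_{ℓ=1}^{d} q_ℓ^{p_ℓ}/√(p_ℓ!))_{p} is an element of the space ℓ² of square-summable families indexed by multi-indices. -/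
set_option maxHeartbeats 1000000
open scoped Nat

def finSuccPiEquiv (n : ℕ) : (Fin (n+1) → ℕ) ≃ ℕ × (Fin n → ℕ) :=
  ⟨fun p => (p 0, fun i => p i.succ), fun x => Fin.cons x.1 x.2,
   fun p => by ext i; exact Fin.cases rfl (fun j => rfl) i,
   fun x => rfl⟩

lemma aux_hasSum_pi : ∀ (d : ℕ) (g : Fin d → ℕ → ℝ), (∀ i n, 0 ≤ g i n) →
    (∀ i, Summable (g i)) →
    HasSum (fun p : Fin d → ℕ => ∏ i, g i (p i)) (∏ i, ∑' n, g i n) := by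
  intro d
  induction d with
  | zero =>
    intro g _ _
    simpa using hasSum_unique (fun _ : Fin 0 → ℕ => (1 : ℝ))
  | succ n ih =>
    intro g hg hs
    have hgs : HasSum (fun p : Fin n → ℕ => ∏ i, g i.succ (p i))
        (∏ i : Fin n, ∑' m, g i.succ m) :=
      ih (fun i => g i.succ) (fun i m => hg _ _) (fun i => hs _)
    have h0 : Summable (g 0) := hs 0
    have h0' : ∀ m, 0 ≤ g 0 m := fun m => hg 0 m
    have hb : Summable (fun p : Fin n → ℕ => ∏ i, g i.succ (p i)) := hgs.summable
    have hb' : ∀ p : Fin n → ℕ, 0 ≤ ∏ i, g i.succ (p i) := fun p =>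
      Finset.prod_nonneg fun i _ => hg _ _
    have hsm := Summable.mul_of_nonneg h0 hb h0' hb'
    have h00 : HasSum (g 0) (∑' m, g 0 m) := h0.hasSum
    have h1 := HasSum.mul h00 hgs hsm
    set e := finSuccPiEquiv n with he
    have h2 := (e.hasSum_iff (f := fun x : ℕ × (Fin n → ℕ) =>
        g 0 x.1 * ∏ i, g i.succ (x.2 i))).2 h1
    have h3 : (fun x : ℕ × (Fin n → ℕ) => g 0 x.1 * ∏ i, g i.succ (x.2 i)) ∘ e
        = fun p : Fin (n+1) → ℕ => ∏ i, g i (p i) := by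
      funext p
      simp only [Function.comp_apply, he, finSuccPiEquiv, Equiv.coe_fn_mk]
      rw [Fin.prod_univ_succ]
      rfl
    rw [h3] at h2
    rw [Fin.prod_univ_succ]
    exact h2

theorem stmt_8 (d : ℕ) (hd : 0 < d) (q : Fin d → ℝ) :
    Summable (fun p : Fin d → ℕ =>
      (∏ ℓ, q ℓ ^ p ℓ / Real.sqrt (Nat.factorial (p ℓ))) ^ 2) ∧
    (∑' p : Fin d → ℕ, (∏ ℓ, q ℓ ^ p ℓ / Real.sqrt (Nat.factorial (p ℓ))) ^ 2
      = Real.exp (∑ ℓ, q ℓ ^ 2)) ∧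
    Memℓp (fun p : Fin d → ℕ => ∏ ℓ, q ℓ ^ p ℓ / Real.sqrt (Nat.factorial (p ℓ))) 2 := by
  set g : Fin d → ℕ → ℝ := fun i n => (q i ^ 2) ^ n / (Nat.factorial n : ℝ)
  have hg : ∀ i n, 0 ≤ g i n := fun i n =>
    div_nonneg (pow_nonneg (sq_nonneg _) _) (Nat.cast_nonneg _)
  have hexp : ∀ i, HasSum (g i) (Real.exp (q i ^ 2)) := by
    intro i
    rw [Real.exp_eq_exp_ℝ]
    exact NormedSpace.expSeries_div_hasSum_exp (q i ^ 2)
  have key : HasSum (fun p : Fin d → ℕ => ∏ i, g i (p i)) (∏ i, ∑' n, g i n) :=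
    aux_hasSum_pi d g hg fun i => (hexp i).summable
  have hsum : (∏ i, ∑' n, g i n) = Real.exp (∑ ℓ, q ℓ ^ 2) := by
    rw [Real.exp_sum]
    exact Finset.prod_congr rfl fun i _ => (hexp i).tsum_eq
  have heq : (fun p : Fin d → ℕ =>
      (∏ ℓ, q ℓ ^ p ℓ / Real.sqrt (Nat.factorial (p ℓ))) ^ 2)
      = fun p : Fin d → ℕ => ∏ i, g i (p i) := by
    funext p
    rw [← Finset.prod_pow]
    refine Finset.prod_congr rfl fun i _ => ?_
    rw [div_pow, Real.sq_sqrt (Nat.cast_nonneg _), ← pow_mul, mul_comm (p i) 2, pow_mul]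
  have key' : HasSum (fun p : Fin d → ℕ =>
      (∏ ℓ, q ℓ ^ p ℓ / Real.sqrt (Nat.factorial (p ℓ))) ^ 2)
      (Real.exp (∑ ℓ, q ℓ ^ 2)) := by
    rw [heq, ← hsum]; exact key
  refine ⟨key'.summable, key'.tsum_eq, ?_⟩
  apply memℓp_gen
  have : (fun p : Fin d → ℕ =>
      ‖∏ ℓ, q ℓ ^ p ℓ / Real.sqrt (Nat.factorial (p ℓ))‖ ^ (2 : ENNReal).toReal)
      = fun p : Fin d → ℕ =>
      (∏ ℓ, q ℓ ^ p ℓ / Real.sqrt (Nat.factorial (p ℓ))) ^ 2 := by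
    funext p
    rw [ENNReal.toReal_ofNat, Real.rpow_two, Real.norm_eq_abs, sq_abs]
  rw [this]
  exact key'.summable
end

section
/- Let d and d_t be positive integers with d ≤ d_t, and let W^Q be a real d × d_t matrix such that the linear map t ↦ W^Q t from ℝ^{d_t} to ℝ^d is surjective (equivalently, W^Q has rank d). Let Φ : ℝ^d → ℓ²({multi-indices p : {1,…,d} → ℕ}) be the exponential feature map Φ(q)_p = ∏_{ℓ=1}^{d} q_ℓ^{p_ℓ}/√(p_ℓ!). Then the closure of the linear span of the set {Φ(W^Q t) : t ∈ ℝ^{d_t}} is all of ℓ². -/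
open Filter

/-- summability of x^n / sqrt(n!) -/
lemma aux_sum_pow (x : ℝ) : Summable (fun n : ℕ => x ^ n / Real.sqrt (Nat.factorial n)) := by
  apply summable_of_ratio_norm_eventually_le (r := 1/2) (by norm_num)
  filter_upwards [eventually_ge_atTop (Nat.ceil ((2*|x|)^2))] with n hn
  have h1 : (0:ℝ) < Real.sqrt (Nat.factorial n) := Real.sqrt_pos.2 (by positivity)
  have h2 : (0:ℝ) < Real.sqrt (Nat.factorial (n+1)) := Real.sqrt_pos.2 (by positivity)
  have key : 2 * |x| ≤ Real.sqrt (n+1) := by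
    rw [show (2*|x|) = Real.sqrt ((2*|x|)^2) by rw [Real.sqrt_sq (by positivity)]]
    apply Real.sqrt_le_sqrt
    calc (2*|x|)^2 ≤ (Nat.ceil ((2*|x|)^2) : ℝ) := Nat.le_ceil _
    _ ≤ (n:ℝ) := by exact_mod_cast hn
    _ ≤ (n:ℝ)+1 := by linarith
  have hfac : Real.sqrt (Nat.factorial (n+1)) = Real.sqrt (n+1) * Real.sqrt (Nat.factorial n) := by
    rw [← Real.sqrt_mul (by positivity)]
    congr 1
    push_cast [Nat.factorial_succ]
    ring
  rw [Real.norm_eq_abs, Real.norm_eq_abs, abs_div, abs_div, abs_pow, abs_pow,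
    abs_of_pos h2, abs_of_pos h1, hfac, pow_succ]
  rw [div_le_iff₀ (by positivity)]
  have hsq : (0:ℝ) < Real.sqrt (n+1) := by
    apply Real.sqrt_pos.2; positivity
  have : |x| ^ n * |x| ≤ |x| ^ n * (Real.sqrt (n+1) / 2) := by
    apply mul_le_mul_of_nonneg_left _ (by positivity)
    linarith
  calc |x| ^ n * |x| ≤ |x| ^ n * (Real.sqrt (n+1) / 2) := this
  _ = 1 / 2 * (|x| ^ n / Real.sqrt (Nat.factorial n)) * (Real.sqrt (n+1) * Real.sqrt (Nat.factorial n)) := by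
      field_simp

/-- summability of products over pi types -/
lemma aux_sum_pi : ∀ (d : ℕ) (v : Fin d → ℕ → ℝ), (∀ ℓ, Summable (v ℓ)) →
    (∀ ℓ n, 0 ≤ v ℓ n) → Summable (fun p : Fin d → ℕ => ∏ ℓ, v ℓ (p ℓ)) := by
  intro d
  induction d with
  | zero =>
    intro v _ _
    simp only [Finset.univ_eq_empty, Finset.prod_empty]
    exact ⟨1, hasSum_single default (fun b hb => absurd (Subsingleton.elim b default) hb)⟩
  | succ n ih =>
    intro v hv hnn
    have hg : Summable (fun p : Fin n → ℕ => ∏ ℓ, v ℓ.succ (p ℓ)) :=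
      ih (fun ℓ => v ℓ.succ) (fun ℓ => hv ℓ.succ) (fun ℓ k => hnn ℓ.succ k)
    have h1 : Summable (fun x : ℕ × (Fin n → ℕ) =>
        v 0 x.1 * ∏ ℓ, v ℓ.succ (x.2 ℓ)) := by
      apply Summable.mul_of_nonneg (hv 0) hg
      · intro k; exact hnn 0 k
      · intro p; exact Finset.prod_nonneg fun ℓ _ => hnn ℓ.succ (p ℓ)
    have h2 := h1.comp_injective (Fin.consEquiv (fun _ => ℕ)).symm.injective
    exact h2.congr fun p => (Fin.prod_univ_succ fun ℓ => v ℓ (p ℓ)).symm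

/-- one-variable: entire tsum power series vanishing implies coefficients zero -/
lemma aux_one_var (a : ℕ → ℝ) (hs : Summable (fun n => |a n|))
    (hz : ∀ t : ℝ, ∑' n, a n * t ^ n = 0) : ∀ n, a n = 0 := by
  set q : FormalMultilinearSeries ℝ ℝ ℝ :=
    fun n => ContinuousMultilinearMap.mkPiRing ℝ (Fin n) (a n) with hq
  have hnorm : ∀ n, ‖q n‖ = |a n| := by
    intro n
    simp [hq, ContinuousMultilinearMap.norm_mkPiRing, Real.norm_eq_abs]
  have hrad : (1 : NNReal) ≤ q.radius := by
    apply FormalMultilinearSeries.le_radius_of_summable_norm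
    simpa [hnorm] using hs
  have happ : ∀ (n : ℕ) (y : ℝ), (q n) (fun _ => y) = a n * y ^ n := by
    intro n y
    simp [hq, ContinuousMultilinearMap.mkPiRing_apply, smul_eq_mul, mul_comm]
  have hball : HasFPowerSeriesOnBall (fun _ : ℝ => (0:ℝ)) q 0 1 := by
    refine ⟨by exact_mod_cast hrad, one_pos, ?_⟩
    intro y hy
    rw [mem_emetric_ball_zero_iff] at hy
    have hy1 : |y| ≤ 1 := by
      have h1 : ‖y‖₊ ≤ 1 := ENNReal.coe_le_one_iff.1 hy.le
      have h2 : ‖y‖ ≤ 1 := by exact_mod_cast h1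
      simpa [Real.norm_eq_abs] using h2
    have hsummable : Summable (fun n => a n * y ^ n) := by
      apply Summable.of_abs
      apply hs.of_nonneg_of_le (fun n => abs_nonneg _)
      intro n
      rw [abs_mul, abs_pow]
      calc |a n| * |y| ^ n ≤ |a n| * 1 := by
            apply mul_le_mul_of_nonneg_left _ (abs_nonneg _)
            exact pow_le_one₀ (abs_nonneg _) hy1
      _ = |a n| := mul_one _
    have := hsummable.hasSum
    rw [hz y] at this
    simpa [happ] using this
  have hzero : q = 0 := hball.hasFPowerSeriesAt.eq_zero
  intro n
  have := congrFun hzero n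
  have h2 := congrArg (fun (m : ContinuousMultilinearMap ℝ (fun _ : Fin n => ℝ) ℝ) => m (fun _ => 1)) this
  simpa [happ] using h2

/-- key inductive lemma: multivariable entire series vanishing -/
lemma aux_key : ∀ (d : ℕ) (c : (Fin d → ℕ) → ℝ),
    (∀ q : Fin d → ℝ, Summable (fun p : Fin d → ℕ => |c p| * ∏ ℓ, |q ℓ| ^ p ℓ)) →
    (∀ q : Fin d → ℝ, ∑' p : Fin d → ℕ, c p * ∏ ℓ, q ℓ ^ p ℓ = 0) →
    ∀ p, c p = 0 := by
  intro d
  induction d with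
  | zero =>
    intro c hs hz p
    have h0 := hz (fun _ => 0)
    rw [tsum_eq_single (default : Fin 0 → ℕ)
      (fun b hb => absurd (Subsingleton.elim b default) hb)] at h0
    simpa [Subsingleton.elim p default] using h0
  | succ n ih =>
    intro c hs hz p
    set e : ℕ × (Fin n → ℕ) ≃ (Fin (n+1) → ℕ) := Fin.consEquiv (fun _ => ℕ) with he
    have hcons : ∀ (t : ℝ) (q' : Fin n → ℝ) (x : ℕ × (Fin n → ℕ)),
        ∏ ℓ, (Fin.cons t q' : Fin (n+1) → ℝ) ℓ ^ (Fin.cons x.1 x.2 : Fin (n+1) → ℕ) ℓ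
          = t ^ x.1 * ∏ ℓ, q' ℓ ^ x.2 ℓ := by
      intro t q' x
      rw [Fin.prod_univ_succ]
      simp [Fin.cons_zero, Fin.cons_succ]
    -- abs summability over the product index for arbitrary (t, q')
    have habs : ∀ (t : ℝ) (q' : Fin n → ℝ),
        Summable (fun x : ℕ × (Fin n → ℕ) =>
          |c (Fin.cons x.1 x.2)| * (|t| ^ x.1 * ∏ ℓ, |q' ℓ| ^ x.2 ℓ)) := by
      intro t q'
      have h1 := (hs (Fin.cons |t| (fun ℓ => |q' ℓ|))).comp_injective e.injective
      apply h1.congr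
      rintro ⟨k, p'⟩
      show |c (Fin.cons k p')| * ∏ ℓ, |(Fin.cons |t| (fun ℓ => |q' ℓ|) : Fin (n+1) → ℝ) ℓ|
          ^ (Fin.cons k p' : Fin (n+1) → ℕ) ℓ = _
      have habs2 : ∀ ℓ : Fin (n+1), |(Fin.cons |t| (fun ℓ => |q' ℓ|) : Fin (n+1) → ℝ) ℓ|
          = (Fin.cons |t| (fun ℓ => |q' ℓ|) : Fin (n+1) → ℝ) ℓ := by
        intro ℓ
        refine Fin.cases ?_ ?_ ℓ <;> simp [abs_abs]
      rw [Finset.prod_congr rfl fun ℓ _ => by rw [habs2 ℓ]]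
      exact congrArg _ (hcons |t| (fun ℓ => |q' ℓ|) (k, p'))
    -- plain summability
    have hsum : ∀ (t : ℝ) (q' : Fin n → ℝ),
        Summable (fun x : ℕ × (Fin n → ℕ) =>
          c (Fin.cons x.1 x.2) * (t ^ x.1 * ∏ ℓ, q' ℓ ^ x.2 ℓ)) := by
      intro t q'
      apply Summable.of_abs
      apply (habs t q').congr
      intro x
      rw [abs_mul, abs_mul, abs_pow, Finset.abs_prod]
      congr 2
      exact Finset.prod_congr rfl (fun ℓ _ => (abs_pow _ _).symm)
    -- inner coefficient functions
    set h : ℕ → (Fin n → ℝ) → ℝ := fun k q' =>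
      ∑' p' : Fin n → ℕ, c (Fin.cons k p') * ∏ ℓ, q' ℓ ^ p' ℓ with hh
    -- rearranged identity
    have hre : ∀ (t : ℝ) (q' : Fin n → ℝ), ∑' k : ℕ, h k q' * t ^ k = 0 := by
      intro t q'
      have h0 := hz (Fin.cons t q')
      have h1 : ∑' pp : Fin (n+1) → ℕ, c pp * ∏ ℓ, (Fin.cons t q' : Fin (n+1) → ℝ) ℓ ^ pp ℓ
          = ∑' x : ℕ × (Fin n → ℕ), c (Fin.cons x.1 x.2) * (t ^ x.1 * ∏ ℓ, q' ℓ ^ x.2 ℓ) := by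
        rw [← e.tsum_eq]
        exact tsum_congr fun x => by rw [he]; exact congrArg _ (hcons t q' x)
      rw [h1, (hsum t q').tsum_prod] at h0
      rw [← h0]
      apply tsum_congr
      intro k
      rw [hh]
      simp only
      rw [← tsum_mul_right]
      exact tsum_congr fun p' => by ring
    -- summability of |h k q'|
    have hhs : ∀ q' : Fin n → ℝ, Summable (fun k => |h k q'|) := by
      intro q'
      have habs1 := habs 1 q'
      have houter : Summable (fun k : ℕ =>
          ∑' p' : Fin n → ℕ, |c (Fin.cons k p')| * (|(1:ℝ)| ^ k * ∏ ℓ, |q' ℓ| ^ p' ℓ)) :=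
        habs1.prod
      apply houter.of_nonneg_of_le (fun k => abs_nonneg _)
      intro k
      have hinner : Summable (fun p' : Fin n → ℕ =>
          ‖c (Fin.cons k p') * ∏ ℓ, q' ℓ ^ p' ℓ‖) := by
        apply (habs1.prod_factor k).congr
        intro p'
        simp only [abs_one, one_pow, one_mul, Real.norm_eq_abs, abs_mul, Finset.abs_prod]
        exact congrArg _ (Finset.prod_congr rfl fun ℓ _ => (abs_pow _ _).symm)
      have hb1 : |h k q'| ≤ ∑' p' : Fin n → ℕ, ‖c (Fin.cons k p') * ∏ ℓ, q' ℓ ^ p' ℓ‖ := by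
        rw [hh]
        exact norm_tsum_le_tsum_norm hinner
      refine hb1.trans (le_of_eq (tsum_congr fun p' => ?_))
      simp only [abs_one, one_pow, one_mul, Real.norm_eq_abs, abs_mul, Finset.abs_prod]
      exact congrArg _ (Finset.prod_congr rfl fun ℓ _ => abs_pow _ _)
    -- each h k vanishes identically
    have hk0 : ∀ (k : ℕ) (q' : Fin n → ℝ), h k q' = 0 := by
      intro k q'
      exact aux_one_var (fun k => h k q') (hhs q') (fun t => hre t q') k
    -- apply IH
    have hc0 : ∀ (k : ℕ) (p' : Fin n → ℕ), c (Fin.cons k p') = 0 := by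
      intro k
      apply ih (fun p' => c (Fin.cons k p'))
      · intro q'
        apply ((habs 1 q').prod_factor k).congr
        intro p'
        simp only [abs_one, one_pow, one_mul]
      · intro q'
        exact hk0 k q'
    have := hc0 (p 0) (Fin.tail p)
    rwa [Fin.cons_self_tail] at this

theorem stmt_9 (d dt : ℕ) (hd : 0 < d) (hddt : d ≤ dt)
    (WQ : Matrix (Fin d) (Fin dt) ℝ)
    (hW : Function.Surjective WQ.mulVec)
    (Φ : (Fin d → ℝ) → lp (fun _ : Fin d → ℕ => ℝ) 2)
    (hΦ : ∀ (q : Fin d → ℝ) (p : Fin d → ℕ),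
      (Φ q : (Fin d → ℕ) → ℝ) p = ∏ ℓ, q ℓ ^ p ℓ / Real.sqrt (Nat.factorial (p ℓ))) :
    Dense (Submodule.span ℝ (Φ '' Set.range WQ.mulVec)
      : Set (lp (fun _ : Fin d → ℕ => ℝ) 2)) := by
  rw [Submodule.dense_iff_topologicalClosure_eq_top,
    Submodule.topologicalClosure_eq_top_iff]
  rw [Submodule.eq_bot_iff]
  intro f hf
  -- orthogonality to all Φ q
  have horth : ∀ q : Fin d → ℝ, (inner ℝ (Φ q) f : ℝ) = 0 := by
    intro q
    obtain ⟨t, rfl⟩ := hW q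
    exact (Submodule.mem_orthogonal _ f).1 hf _
      (Submodule.subset_span ⟨_, ⟨t, rfl⟩, rfl⟩)
  -- the coefficient family
  set c : (Fin d → ℕ) → ℝ :=
    fun p => f p * ∏ ℓ, (Real.sqrt (Nat.factorial (p ℓ)))⁻¹ with hc
  have hsqrt_pos : ∀ k : ℕ, (0:ℝ) < Real.sqrt (Nat.factorial k) := by
    intro k
    apply Real.sqrt_pos.2
    exact_mod_cast Nat.factorial_pos k
  -- inner product formula
  have hinner : ∀ q : Fin d → ℝ, (inner ℝ (Φ q) f : ℝ) = ∑' p : Fin d → ℕ, c p * ∏ ℓ, q ℓ ^ p ℓ := by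
    intro q
    rw [lp.inner_eq_tsum]
    apply tsum_congr
    intro p
    simp only [RCLike.inner_apply, starRingEnd_apply, star_trivial, hΦ q p, hc]
    rw [Finset.prod_div_distrib, div_eq_mul_inv, ← Finset.prod_inv_distrib]
    ring
  -- summability of |c p| * ∏ |q ℓ| ^ p ℓ
  have hbound : ∀ p : Fin d → ℕ, |f p| ≤ ‖f‖ := by
    intro p
    have := lp.norm_apply_le_norm (by norm_num : (2:ENNReal) ≠ 0) f p
    simpa [Real.norm_eq_abs] using this
  have hsummable : ∀ q : Fin d → ℝ,
      Summable (fun p : Fin d → ℕ => |c p| * ∏ ℓ, |q ℓ| ^ p ℓ) := by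
    intro q
    have hdom : Summable (fun p : Fin d → ℕ =>
        ‖f‖ * ∏ ℓ, (|q ℓ| ^ p ℓ / Real.sqrt (Nat.factorial (p ℓ)))) := by
      apply Summable.mul_left
      apply aux_sum_pi d (fun ℓ k => |q ℓ| ^ k / Real.sqrt (Nat.factorial k))
      · intro ℓ
        exact aux_sum_pow |q ℓ|
      · intro ℓ k
        positivity
    apply hdom.of_nonneg_of_le
    · intro p
      positivity
    · intro p
      rw [hc]
      simp only
      rw [abs_mul, Finset.abs_prod]
      have h1 : ∀ ℓ : Fin d, |(Real.sqrt (Nat.factorial (p ℓ)))⁻¹|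
          = (Real.sqrt (Nat.factorial (p ℓ)))⁻¹ := fun ℓ =>
        abs_of_pos (inv_pos.2 (hsqrt_pos _))
      rw [Finset.prod_congr rfl fun ℓ _ => h1 ℓ]
      calc |f p| * (∏ ℓ, (Real.sqrt (Nat.factorial (p ℓ)))⁻¹) * ∏ ℓ, |q ℓ| ^ p ℓ
          ≤ ‖f‖ * (∏ ℓ, (Real.sqrt (Nat.factorial (p ℓ)))⁻¹) * ∏ ℓ, |q ℓ| ^ p ℓ := by
            apply mul_le_mul_of_nonneg_right _ (by positivity)
            exact mul_le_mul_of_nonneg_right (hbound p) (by positivity)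
      _ = ‖f‖ * ∏ ℓ, (|q ℓ| ^ p ℓ / Real.sqrt (Nat.factorial (p ℓ))) := by
            rw [mul_assoc, ← Finset.prod_mul_distrib]
            congr 1
            exact Finset.prod_congr rfl fun ℓ _ => by rw [div_eq_mul_inv]; ring
  -- c vanishes
  have hc0 : ∀ p, c p = 0 := by
    apply aux_key d c hsummable
    intro q
    rw [← hinner q]
    exact horth q
  -- hence f = 0
  have hf0 : ∀ p : Fin d → ℕ, f p = 0 := by
    intro p
    have := hc0 p
    rw [hc] at this
    simp only at this
    rcases mul_eq_zero.1 this with h | h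
    · exact h
    · exfalso
      have : (0:ℝ) < ∏ ℓ, (Real.sqrt (Nat.factorial (p ℓ)))⁻¹ :=
        Finset.prod_pos fun ℓ _ => inv_pos.2 (hsqrt_pos _)
      rw [h] at this
      exact lt_irrefl 0 this
  exact lp.ext (funext hf0)
end

section
/- Let X and Y be nonempty sets, B_X and B_Y real normed vector spaces, and e_X : B_X → (X → ℝ) and e_Y : B_Y → (Y → ℝ) injective linear maps realizing their elements as real-valued functions. Fix data points x₁, …, x_{n_x} ∈ X and y₁, …, y_{n_y} ∈ Y, a loss function L : {1,…,n_x} × {1,…,n_y} × ℝ × ℝ → ℝ, strictly increasing regularization functions R_X, R_Y : [0, ∞) → ℝ, and scalars λ_X, λ_Y > 0. Define the regularized empirical risk T(f, g) = (1/(n_x n_y))·Σ_{i,j} L(i, j, (e_X f)(x_i), (e_Y g)(y_j)) + λ_X·R_X(‖f‖_{B_X}) + λ_Y·R_Y(‖g‖_{B_Y}). Suppose (f*, g*) minimizes T over B_X × B_Y, and suppose the norm of B_X is Gâteaux differentiable at f* with derivative the continuous linear functional D : B_X → ℝ (i.e. for every w ∈ B_X, the function t ↦ ‖f* + t·w‖_{B_X}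 is differentiable at t = 0 with derivative D(w)), and likewise the norm of B_Y is Gâteaux differentiable at g* with derivative D' : B_Y → ℝ. Then there exist coefficients ξ₁, …, ξ_{n_x} ∈ ℝ and ζ₁, …, ζ_{n_y} ∈ ℝ such that D(w) = Σ_{i=1}^{n_x} ξ_i·(e_X w)(x_i) for all w ∈ B_X and D'(v) = Σ_{j=1}^{n_y} ζ_j·(e_Y v)(y_j) for all v ∈ B_Y. -/
lemma span_rep {B : Type*} [AddCommGroup B] [Module ℝ B] {n : ℕ}
    (φ : Fin n → B →ₗ[ℝ] ℝ) (D : B →ₗ[ℝ] ℝ)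
    (h0 : ∀ w, (∀ i, φ i w = 0) → D w = 0) :
    ∃ ξ : Fin n → ℝ, ∀ w, D w = ∑ i, ξ i * φ i w := by
  have hker : ⨅ i, LinearMap.ker (φ i) ≤ LinearMap.ker D := by
    intro w hw
    simp only [Submodule.mem_iInf, LinearMap.mem_ker] at hw ⊢
    exact h0 w hw
  have hmem := mem_span_of_iInf_ker_le_ker hker
  obtain ⟨c, hc⟩ := (Submodule.mem_span_range_iff_exists_fun ℝ).1 hmem
  refine ⟨c, fun w => ?_⟩
  have := congrFun (congrArg (fun (f : B →ₗ[ℝ] ℝ) => (f : B → ℝ)) hc) w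
  simp only [LinearMap.coe_sum, Finset.sum_apply, LinearMap.smul_apply,
    smul_eq_mul] at this
  exact this.symm


theorem stmt_12 {X Y : Type*} [Nonempty X] [Nonempty Y]
    {BX BY : Type*} [NormedAddCommGroup BX] [NormedSpace ℝ BX]
    [NormedAddCommGroup BY] [NormedSpace ℝ BY]
    (eX : BX →ₗ[ℝ] X → ℝ) (eY : BY →ₗ[ℝ] Y → ℝ)
    (heX : Function.Injective eX) (heY : Function.Injective eY)
    (nx ny : ℕ) (x : Fin nx → X) (y : Fin ny → Y)
    (L : Fin nx → Fin ny → ℝ → ℝ → ℝ)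
    (RX RY : ℝ → ℝ)
    (hRX : StrictMonoOn RX (Set.Ici 0)) (hRY : StrictMonoOn RY (Set.Ici 0))
    (lamX lamY : ℝ) (hlamX : 0 < lamX) (hlamY : 0 < lamY)
    (T : BX → BY → ℝ)
    (hT : ∀ (f : BX) (g : BY),
      T f g = (1 / (nx * ny) : ℝ) * ∑ i, ∑ j, L i j (eX f (x i)) (eY g (y j))
        + lamX * RX ‖f‖ + lamY * RY ‖g‖)
    (fstar : BX) (gstar : BY)
    (hmin : ∀ (f : BX) (g : BY), T fstar gstar ≤ T f g)
    (D : BX →L[ℝ] ℝ) (D' : BY →L[ℝ] ℝ)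
    (hD : ∀ w : BX, HasDerivAt (fun τ : ℝ => ‖fstar + τ • w‖) (D w) 0)
    (hD' : ∀ v : BY, HasDerivAt (fun τ : ℝ => ‖gstar + τ • v‖) (D' v) 0) :
    ∃ (ξ : Fin nx → ℝ) (ζ : Fin ny → ℝ),
      (∀ w : BX, D w = ∑ i, ξ i * eX w (x i)) ∧
      (∀ v : BY, D' v = ∑ j, ζ j * eY v (y j)) := by
  -- X side kernel vanishing
  have hX0 : ∀ w : BX, (∀ i, eX w (x i) = 0) → D w = 0 := by
    intro w hw
    have hge : ∀ t : ℝ, ‖fstar‖ ≤ ‖fstar + t • w‖ := by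
      intro t
      have h1 := hmin (fstar + t • w) gstar
      rw [hT, hT] at h1
      have heval : ∀ i, eX (fstar + t • w) (x i) = eX fstar (x i) := by
        intro i
        simp [map_add, map_smul, hw i]
      simp only [heval] at h1
      have h2 : RX ‖fstar‖ ≤ RX ‖fstar + t • w‖ := le_of_mul_le_mul_left (by linarith) hlamX
      by_contra hlt
      push_neg at hlt
      exact absurd h2 (not_le.2 (hRX (norm_nonneg _) (norm_nonneg _) hlt))
    have hloc : IsLocalMin (fun τ : ℝ => ‖fstar + τ • w‖) 0 :=
      Filter.Eventually.of_forall (fun t => by simpa using hge t)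
    exact hloc.hasDerivAt_eq_zero (hD w)
  have hY0 : ∀ v : BY, (∀ j, eY v (y j) = 0) → D' v = 0 := by
    intro v hv
    have hge : ∀ t : ℝ, ‖gstar‖ ≤ ‖gstar + t • v‖ := by
      intro t
      have h1 := hmin fstar (gstar + t • v)
      rw [hT, hT] at h1
      have heval : ∀ j, eY (gstar + t • v) (y j) = eY gstar (y j) := by
        intro j
        simp [map_add, map_smul, hv j]
      simp only [heval] at h1
      have h2 : RY ‖gstar‖ ≤ RY ‖gstar + t • v‖ := le_of_mul_le_mul_left (by linarith) hlamY
      by_contra hlt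
      push_neg at hlt
      exact absurd h2 (not_le.2 (hRY (norm_nonneg _) (norm_nonneg _) hlt))
    have hloc : IsLocalMin (fun τ : ℝ => ‖gstar + τ • v‖) 0 :=
      Filter.Eventually.of_forall (fun t => by simpa using hge t)
    exact hloc.hasDerivAt_eq_zero (hD' v)
  obtain ⟨ξ, hξ⟩ := span_rep (fun i => (LinearMap.proj (x i) : (X → ℝ) →ₗ[ℝ] ℝ).comp eX)
    D.toLinearMap hX0
  obtain ⟨ζ, hζ⟩ := span_rep (fun j => (LinearMap.proj (y j) : (Y → ℝ) →ₗ[ℝ] ℝ).comp eY)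
    D'.toLinearMap hY0
  exact ⟨ξ, ζ, fun w => hξ w, fun v => hζ v⟩
end

section
/- Let X and Y be nonempty sets, B_X and B_Y real normed vector spaces, and e_X : B_X → (X → ℝ) and e_Y : B_Y → (Y → ℝ) injective linear maps realizing their elements as real-valued functions. Fix points x₁, …, x_{n_x} ∈ X and y₁, …, y_{n_y} ∈ Y and responses z_{ij} ∈ ℝ for i = 1,…,n_x, j = 1,…,n_y, and let N be the set of pairs (f, g) ∈ B_X × B_Y satisfying the interpolation constraints (e_X f)(x_i)·(e_Y g)(y_j) = z_{ij} for all i, j. Suppose (f*, g*) ∈ N minimizes ‖f‖_{B_X} + ‖g‖_{B_Y} over N, the norm of B_X is Gâteaux differentiable at f* with derivative the linear functional D : B_X → ℝ (i.e. for every w ∈ B_X, the function t ↦ ‖f* + t·w‖_{B_X} is differentiable at t = 0 with derivative D(w)), and the norm of B_Y is Gâteaux differentiable at g* with derivative D' : B_Y → ℝ. Then there exist ξ₁, …, ξ_{n_x} ∈ ℝ and ζ₁, …, ζ_{n_y} ∈ ℝ such that D(w) = Σ_{i=1}^{n_x} ξ_i·(e_X w)(x_i) for all w ∈ B_X and D'(v)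 = Σ_{j=1}^{n_y} ζ_j·(e_Y v)(y_j) for all v ∈ B_Y. -/
theorem stmt_13 {X Y : Type*} [Nonempty X] [Nonempty Y]
    {BX BY : Type*} [NormedAddCommGroup BX] [NormedSpace ℝ BX]
    [NormedAddCommGroup BY] [NormedSpace ℝ BY]
    (eX : BX →ₗ[ℝ] X → ℝ) (eY : BY →ₗ[ℝ] Y → ℝ)
    (heX : Function.Injective eX) (heY : Function.Injective eY)
    (nx ny : ℕ) (x : Fin nx → X) (y : Fin ny → Y)
    (z : Fin nx → Fin ny → ℝ)
    (fstar : BX) (gstar : BY)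
    (hmem : ∀ (i : Fin nx) (j : Fin ny), eX fstar (x i) * eY gstar (y j) = z i j)
    (hmin : ∀ (f : BX) (g : BY),
      (∀ (i : Fin nx) (j : Fin ny), eX f (x i) * eY g (y j) = z i j) →
      ‖fstar‖ + ‖gstar‖ ≤ ‖f‖ + ‖g‖)
    (D : BX →L[ℝ] ℝ) (D' : BY →L[ℝ] ℝ)
    (hD : ∀ w : BX, HasDerivAt (fun τ : ℝ => ‖fstar + τ • w‖) (D w) 0)
    (hD' : ∀ v : BY, HasDerivAt (fun τ : ℝ => ‖gstar + τ • v‖) (D' v) 0) :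
    ∃ (ξ : Fin nx → ℝ) (ζ : Fin ny → ℝ),
      (∀ w : BX, D w = ∑ i, ξ i * eX w (x i)) ∧
      (∀ v : BY, D' v = ∑ j, ζ j * eY v (y j)) := by
  -- linear evaluation functionals
  set LX : Fin nx → BX →ₗ[ℝ] ℝ := fun i =>
    (LinearMap.proj (x i) : (X → ℝ) →ₗ[ℝ] ℝ).comp eX with hLX
  set LY : Fin ny → BY →ₗ[ℝ] ℝ := fun j =>
    (LinearMap.proj (y j) : (Y → ℝ) →ₗ[ℝ] ℝ).comp eY with hLY
  have hkerX : ⨅ i, LinearMap.ker (LX i) ≤ LinearMap.ker (D : BX →ₗ[ℝ] ℝ) := by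
    intro w hw
    simp only [Submodule.mem_iInf, LinearMap.mem_ker, hLX, LinearMap.comp_apply,
      LinearMap.proj_apply] at hw
    have hmin' : ∀ τ : ℝ, ‖fstar‖ ≤ ‖fstar + τ • w‖ := by
      intro τ
      have hc : ∀ (i : Fin nx) (j : Fin ny),
          eX (fstar + τ • w) (x i) * eY gstar (y j) = z i j := by
        intro i j
        have : eX (fstar + τ • w) (x i) = eX fstar (x i) := by
          simp [map_add, map_smul, hw i]
        rw [this]; exact hmem i j
      have := hmin (fstar + τ • w) gstar hc
      linarith
    have hloc : IsLocalMin (fun τ : ℝ => ‖fstar + τ • w‖) 0 := by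
      apply IsMinOn.isLocalMin (s := Set.univ)
      · intro τ _
        simpa using hmin' τ
      · exact Filter.univ_mem
    have := hloc.hasDerivAt_eq_zero (hD w)
    simpa using this
  have hkerY : ⨅ j, LinearMap.ker (LY j) ≤ LinearMap.ker (D' : BY →ₗ[ℝ] ℝ) := by
    intro v hv
    simp only [Submodule.mem_iInf, LinearMap.mem_ker, hLY, LinearMap.comp_apply,
      LinearMap.proj_apply] at hv
    have hmin' : ∀ τ : ℝ, ‖gstar‖ ≤ ‖gstar + τ • v‖ := by
      intro τ
      have hc : ∀ (i : Fin nx) (j : Fin ny),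
          eX fstar (x i) * eY (gstar + τ • v) (y j) = z i j := by
        intro i j
        have : eY (gstar + τ • v) (y j) = eY gstar (y j) := by
          simp [map_add, map_smul, hv j]
        rw [this]; exact hmem i j
      have := hmin fstar (gstar + τ • v) hc
      linarith
    have hloc : IsLocalMin (fun τ : ℝ => ‖gstar + τ • v‖) 0 := by
      apply IsMinOn.isLocalMin (s := Set.univ)
      · intro τ _
        simpa using hmin' τ
      · exact Filter.univ_mem
    have := hloc.hasDerivAt_eq_zero (hD' v)
    simpa using this
  obtain ⟨ξ, hξ⟩ := (Submodule.mem_span_range_iff_exists_fun ℝ).1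
    (mem_span_of_iInf_ker_le_ker hkerX)
  obtain ⟨ζ, hζ⟩ := (Submodule.mem_span_range_iff_exists_fun ℝ).1
    (mem_span_of_iInf_ker_le_ker hkerY)
  refine ⟨ξ, ζ, fun w => ?_, fun v => ?_⟩
  · have := congrFun (congrArg (fun (T : BX →ₗ[ℝ] ℝ) => (T : BX → ℝ)) hξ) w
    simp only [LinearMap.coe_sum, Finset.sum_apply, LinearMap.smul_apply, hLX,
      LinearMap.comp_apply, LinearMap.proj_apply, smul_eq_mul] at this
    simpa using this.symm
  · have := congrFun (congrArg (fun (T : BY →ₗ[ℝ] ℝ) => (T : BY → ℝ)) hζ) v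
    simp only [LinearMap.coe_sum, Finset.sum_apply, LinearMap.smul_apply, hLY,
      LinearMap.comp_apply, LinearMap.proj_apply, smul_eq_mul] at this
    simpa using this.symm
end
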